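/- arXiv:1302.1340 — 4 statements merged into one kernel-verified Lean document; each statement's English description precedes it below -/
import Mathlib

section
/- Suppose Y is a compact Hausdorff space and ε : X → Y is a function such that ε(X) is dense in Y. Then: (i) the set F = {h ∘ ε : h ∈ C(Y)} is a C*-subalgebra of ℓ∞(X) containing the constant functions; (ii) F is isometrically isomorphic to C(Y); (iii) there exists a homeomorphism G : δX → Y (where δX is the space of F-ultrafilters for this F) such that G ∘ e = ε. -/
open Set

variable {X : Type*} [Nonempty X] [TopologicalSpace X] [DiscreteTopology X]

/-- The set `X(f,r) = {x ∈ X : |f(x)| ≤ r}`. -/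
def XSet (f : BoundedContinuousFunction X ℂ) (r : ℝ) : Set X := {x | ‖f x‖ ≤ r}

/-- An `F`-family on `X`: a nonempty collection of nonempty subsets of `X` such that for every
member `A ≠ X` there are `B` in the collection and `f ∈ F` with `f(B) = {0}`,
`f(X \ A) = {1}`. -/
def FFamily (F : StarSubalgebra ℂ (BoundedContinuousFunction X ℂ)) (𝒜 : Set (Set X)) : Prop :=
  𝒜.Nonempty ∧ (∀ A ∈ 𝒜, A.Nonempty) ∧
    ∀ A ∈ 𝒜, A ≠ Set.univ →
      ∃ B ∈ 𝒜, ∃ f ∈ F, (∀ x ∈ B, f x = 0) ∧ ∀ x ∉ A, f x = 1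

/-- A filter on the set `X`, viewed as a collection of subsets. -/
def IsSetFilter (φ : Set (Set X)) : Prop :=
  φ.Nonempty ∧ (∀ A ∈ φ, ∀ B ∈ φ, A ∩ B ∈ φ) ∧
    (∀ A ∈ φ, ∀ B : Set X, A ⊆ B → B ∈ φ) ∧ ∅ ∉ φ

/-- An `F`-filter on `X` is a filter which is also an `F`-family. -/
def FFilter (F : StarSubalgebra ℂ (BoundedContinuousFunction X ℂ)) (φ : Set (Set X)) : Prop :=
  IsSetFilter φ ∧ FFamily F φ

/-- An `F`-ultrafilter on `X` is an `F`-filter maximal with respect to inclusion. -/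
def FUltrafilter (F : StarSubalgebra ℂ (BoundedContinuousFunction X ℂ)) (φ : Set (Set X)) : Prop :=
  FFilter F φ ∧ ∀ ψ : Set (Set X), FFilter F ψ → φ ⊆ ψ → ψ = φ

/-- `F₀ = {f ∈ F : X(f,r) ≠ ∅ for all r > 0}`. -/
def FZero (F : StarSubalgebra ℂ (BoundedContinuousFunction X ℂ)) :
    Set (BoundedContinuousFunction X ℂ) :=
  {f | f ∈ F ∧ ∀ r : ℝ, 0 < r → (XSet f r).Nonempty}

/-- `Z(A) = {f ∈ F : f(x) = 0 for all x ∈ A}`. -/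
def ZSet (F : StarSubalgebra ℂ (BoundedContinuousFunction X ℂ)) (A : Set X) :
    Set (BoundedContinuousFunction X ℂ) :=
  {f | f ∈ F ∧ ∀ x ∈ A, f x = 0}

/-- The finite intersection property. -/
def FIP (𝒜 : Set (Set X)) : Prop :=
  ∀ s : Finset (Set X), ↑s ⊆ 𝒜 → s.Nonempty → (⋂₀ (s : Set (Set X))).Nonempty

/-- A filter base on `X`. -/
def IsFilterBase (ℬ : Set (Set X)) : Prop :=
  ℬ.Nonempty ∧ ∅ ∉ ℬ ∧ ∀ A ∈ ℬ, ∀ B ∈ ℬ, ∃ C ∈ ℬ, C ⊆ A ∩ B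

/-- The filter generated by a filter base. -/
def genFilter (ℬ : Set (Set X)) : Set (Set X) :=
  {A | ∃ B ∈ ℬ, B ⊆ A}

/-- `δX`, the space of all `F`-ultrafilters on `X`. -/
def Delta (F : StarSubalgebra ℂ (BoundedContinuousFunction X ℂ)) : Type _ :=
  {p : Set (Set X) // FUltrafilter F p}

/-- `Â = {p ∈ δX : A ∈ p}`. -/
def hatSet (F : StarSubalgebra ℂ (BoundedContinuousFunction X ℂ)) (A : Set X) :
    Set (Delta F) :=
  {p | A ∈ p.1}

/-- The topology on `δX` having `{Â : A ⊆ X}` as a base. -/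
instance (F : StarSubalgebra ℂ (BoundedContinuousFunction X ℂ)) :
    TopologicalSpace (Delta F) :=
  TopologicalSpace.generateFrom {S | ∃ A : Set X, S = hatSet F A}

/-- For an `F`-filter `φ`, `φ̂ = {p ∈ δX : φ ⊆ p}`. -/
def hatF (F : StarSubalgebra ℂ (BoundedContinuousFunction X ℂ)) (φ : Set (Set X)) :
    Set (Delta F) :=
  {p | φ ⊆ p.1}

/-- `τ(F)`, the weakest topology on `X` making every member of `F` continuous. -/
noncomputable def tauF (F : StarSubalgebra ℂ (BoundedContinuousFunction X ℂ)) : TopologicalSpace X :=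
  ⨅ f ∈ (F : Set (BoundedContinuousFunction X ℂ)),
    TopologicalSpace.induced (fun x => f x) inferInstance

/-- `B(I) = {X(f,r) : f ∈ I, r > 0}` for an ideal `I` of `F`. -/
def BIdeal (F : StarSubalgebra ℂ (BoundedContinuousFunction X ℂ)) (I : Ideal F) :
    Set (Set X) :=
  {S | ∃ f ∈ I, ∃ r : ℝ, 0 < r ∧ S = XSet (f : BoundedContinuousFunction X ℂ) r}


set_option linter.unusedSectionVars false
set_option maxHeartbeats 1000000

open BoundedContinuousFunction Topology

section Aux

variable {Y : Type*} [TopologicalSpace Y] [CompactSpace Y] [T2Space Y]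

/-- The star algebra hom `C(Y,ℂ) → ℓ∞(X)`, `h ↦ h ∘ ε`. -/
noncomputable def psiHom (ε : X → Y) : C(Y, ℂ) →⋆ₐ[ℂ] BoundedContinuousFunction X ℂ where
  toFun h := (mkOfCompact h).compContinuous ⟨ε, continuous_of_discreteTopology⟩
  map_one' := by ext x; simp
  map_mul' h g := by ext x; simp
  map_zero' := by ext x; simp
  map_add' h g := by ext x; simp
  commutes' c := by ext x; simp
  map_star' h := by ext x; simp

@[simp] lemma psiHom_apply (ε : X → Y) (h : C(Y, ℂ)) (x : X) : psiHom ε h x = h (ε x) := rfl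

lemma psiHom_norm {ε : X → Y} (hε : Dense (Set.range ε)) (h : C(Y, ℂ)) :
    ‖psiHom ε h‖ = ‖h‖ := by
  refine le_antisymm ?_ ?_
  · refine (BoundedContinuousFunction.norm_le (norm_nonneg h)).2 fun x => ?_
    simpa using h.norm_coe_le_norm (ε x)
  · refine (ContinuousMap.norm_le h (norm_nonneg _)).2 fun y => ?_
    have hcl : y ∈ closure (Set.range ε) := by rw [hε.closure_eq]; trivial
    have hclosed : IsClosed {z : Y | ‖h z‖ ≤ ‖psiHom ε h‖} :=
      isClosed_le (by continuity) continuous_const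
    have hsub : Set.range ε ⊆ {z : Y | ‖h z‖ ≤ ‖psiHom ε h‖} := by
      rintro _ ⟨x, rfl⟩
      simpa using (psiHom ε h).norm_coe_le_norm x
    exact closure_minimal hsub hclosed hcl

lemma psiHom_isometry {ε : X → Y} (hε : Dense (Set.range ε)) : Isometry (psiHom ε) :=
  AddMonoidHomClass.isometry_of_norm _ fun h => psiHom_norm hε h

end Aux

section Phi

variable {Y : Type*} [TopologicalSpace Y] [CompactSpace Y] [T2Space Y]

/-- Complex Urysohn lemma. -/
lemma urysohnC {s t : Set Y} (hs : IsClosed s) (ht : IsClosed t) (hd : Disjoint s t) :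
    ∃ h : C(Y, ℂ), (∀ z ∈ s, h z = 0) ∧ (∀ z ∈ t, h z = 1) := by
  obtain ⟨f, hf0, hf1, -⟩ := exists_continuous_zero_one_of_isClosed hs ht hd
  refine ⟨⟨fun z => (f z : ℂ), Complex.continuous_ofReal.comp f.continuous⟩, ?_, ?_⟩
  · intro z hz; simp [hf0 hz]
  · intro z hz; simp [hf1 hz]

/-- The `F`-ultrafilter corresponding to a point `y ∈ Y`. -/
def phiY (ε : X → Y) (y : Y) : Set (Set X) :=
  {A | ∃ U : Set Y, IsOpen U ∧ y ∈ U ∧ ε ⁻¹' U ⊆ A}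

variable {ε : X → Y} {y : Y}

lemma univ_mem_phiY : Set.univ ∈ phiY ε y :=
  ⟨Set.univ, isOpen_univ, trivial, subset_rfl⟩

lemma phiY_nonempty_mem (hε : Dense (Set.range ε)) :
    ∀ A ∈ phiY ε y, A.Nonempty := by
  rintro A ⟨U, hU, hyU, hUA⟩
  obtain ⟨-, ⟨x, rfl⟩, hxU⟩ := hε.exists_mem_open hU ⟨y, hyU⟩
  exact ⟨x, hUA hxU⟩

lemma phiY_isSetFilter (hε : Dense (Set.range ε)) : IsSetFilter (phiY ε y) := by
  refine ⟨⟨Set.univ, univ_mem_phiY⟩, ?_, ?_, ?_⟩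
  · rintro A ⟨U, hU, hyU, hUA⟩ B ⟨V, hV, hyV, hVB⟩
    exact ⟨U ∩ V, hU.inter hV, ⟨hyU, hyV⟩,
      fun x hx => ⟨hUA hx.1, hVB hx.2⟩⟩
  · rintro A ⟨U, hU, hyU, hUA⟩ B hAB
    exact ⟨U, hU, hyU, hUA.trans hAB⟩
  · intro h
    obtain ⟨x, hx⟩ := phiY_nonempty_mem hε _ h
    exact hx

/-- Membership criterion for `phiY` from a separating function. -/
lemma mem_phiY_of_fun {A : Set X} (h : C(Y, ℂ)) (hy : h y = 0)
    (h1 : ∀ x ∉ A, h (ε x) = 1) : A ∈ phiY ε y := by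
  refine ⟨h ⁻¹' {(1 : ℂ)}ᶜ, (isOpen_compl_singleton).preimage h.continuous, ?_, ?_⟩
  · simp [Set.mem_preimage, hy]
  · intro x hx
    by_contra hxA
    exact hx (h1 x hxA)

variable {F : StarSubalgebra ℂ (BoundedContinuousFunction X ℂ)}

lemma phiY_FFamily
    (hF : (F : Set (BoundedContinuousFunction X ℂ)) =
      {f : BoundedContinuousFunction X ℂ | ∃ h : C(Y, ℂ), ∀ x : X, f x = h (ε x)})
    (hε : Dense (Set.range ε)) : FFamily F (phiY ε y) := by
  refine ⟨⟨Set.univ, univ_mem_phiY⟩, phiY_nonempty_mem hε, ?_⟩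
  rintro A ⟨U, hU, hyU, hUA⟩ hAne
  obtain ⟨V, hV, hyV, hVU⟩ :=
    normal_exists_closure_subset (isClosed_singleton (x := y)) hU
      (Set.singleton_subset_iff.mpr hyU)
  obtain ⟨h, h0, h1⟩ := urysohnC (isClosed_closure (s := V)) hU.isClosed_compl
    (Set.disjoint_compl_right_iff_subset.mpr hVU)
  have hmem : ((mkOfCompact h).compContinuous ⟨ε, continuous_of_discreteTopology⟩ :
      BoundedContinuousFunction X ℂ) ∈ F := by
    have : ((mkOfCompact h).compContinuous ⟨ε, continuous_of_discreteTopology⟩ :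
        BoundedContinuousFunction X ℂ) ∈ (F : Set (BoundedContinuousFunction X ℂ)) := by
      rw [hF]; exact ⟨h, fun x => rfl⟩
    exact this
  refine ⟨ε ⁻¹' V, ⟨V, hV, hyV rfl, subset_rfl⟩, _, hmem, ?_, ?_⟩
  · intro x hx
    exact h0 _ (subset_closure hx)
  · intro x hx
    exact h1 _ (fun hU' => hx (hUA hU'))

/-- If every member of an F-family `ψ` has `y` in the closure of its `ε`-image,
then `ψ ⊆ phiY ε y`. -/
lemma subset_phiY
    (hF : (F : Set (BoundedContinuousFunction X ℂ)) =
      {f : BoundedContinuousFunction X ℂ | ∃ h : C(Y, ℂ), ∀ x : X, f x = h (ε x)})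
    {ψ : Set (Set X)} (hψ : FFamily F ψ)
    (hclo : ∀ B ∈ ψ, y ∈ closure (ε '' B)) : ψ ⊆ phiY ε y := by
  intro A hA
  by_cases hAu : A = Set.univ
  · exact hAu ▸ univ_mem_phiY
  obtain ⟨B, hB, f, hfF, hf0, hf1⟩ := hψ.2.2 A hA hAu
  rw [← SetLike.mem_coe, hF] at hfF
  obtain ⟨h, hh⟩ := hfF
  have hy0 : h y = 0 := by
    have hcl : IsClosed {z : Y | h z = 0} :=
      isClosed_eq h.continuous continuous_const
    have hsub : ε '' B ⊆ {z : Y | h z = 0} := by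
      rintro - ⟨x, hx, rfl⟩
      simp only [Set.mem_setOf_eq]
      rw [← hh x]; exact hf0 x hx
    exact closure_minimal hsub hcl (hclo B hB)
  exact mem_phiY_of_fun h hy0 (fun x hx => by have := hf1 x hx; rw [hh x] at this; exact this)

lemma phiY_ultra
    (hF : (F : Set (BoundedContinuousFunction X ℂ)) =
      {f : BoundedContinuousFunction X ℂ | ∃ h : C(Y, ℂ), ∀ x : X, f x = h (ε x)})
    (hε : Dense (Set.range ε)) : FUltrafilter F (phiY ε y) := by
  refine ⟨⟨phiY_isSetFilter hε, phiY_FFamily hF hε⟩, ?_⟩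
  intro ψ hψ hsub
  refine Set.Subset.antisymm ?_ hsub
  refine subset_phiY hF hψ.2 ?_
  intro B hB
  rw [mem_closure_iff]
  intro U hU hyU
  have hmem : B ∩ ε ⁻¹' U ∈ ψ :=
    hψ.1.2.1 B hB _ (hsub ⟨U, hU, hyU, subset_rfl⟩)
  have hne : (B ∩ ε ⁻¹' U).Nonempty := by
    rcases Set.eq_empty_or_nonempty (B ∩ ε ⁻¹' U) with h | h
    · exact absurd (h ▸ hmem) hψ.1.2.2.2
    · exact h
  obtain ⟨x, hxB, hxU⟩ := hne
  exact ⟨ε x, hxU, ⟨x, hxB, rfl⟩⟩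

lemma phiY_surjective
    (hF : (F : Set (BoundedContinuousFunction X ℂ)) =
      {f : BoundedContinuousFunction X ℂ | ∃ h : C(Y, ℂ), ∀ x : X, f x = h (ε x)})
    (hε : Dense (Set.range ε))
    {p : Set (Set X)} (hp : FUltrafilter F p) : ∃ y : Y, phiY ε y = p := by
  obtain ⟨A₀, hA₀⟩ := hp.1.2.1
  haveI : Nonempty p := ⟨⟨A₀, hA₀⟩⟩
  have hglobal : (⋂ A : p, closure (ε '' (A : Set X))).Nonempty := by
    apply IsCompact.nonempty_iInter_of_directed_nonempty_isCompact_isClosed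
    · rintro ⟨A, hA⟩ ⟨B, hB⟩
      refine ⟨⟨A ∩ B, hp.1.1.2.1 A hA B hB⟩, ?_, ?_⟩
      · exact closure_mono (Set.image_mono Set.inter_subset_left)
      · exact closure_mono (Set.image_mono Set.inter_subset_right)
    · rintro ⟨A, hA⟩
      exact ((hp.1.2.2.1 A hA).image ε).closure
    · intro _; exact isClosed_closure.isCompact
    · intro _; exact isClosed_closure
  obtain ⟨y, hy⟩ := hglobal
  refine ⟨y, hp.2 (phiY ε y) ⟨phiY_isSetFilter hε, phiY_FFamily hF hε⟩ ?_⟩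
  refine subset_phiY hF hp.1.2 ?_
  intro B hB
  exact Set.mem_iInter.mp hy ⟨B, hB⟩

lemma phiY_injective (hε : Dense (Set.range ε)) : Function.Injective (phiY ε) := by
  intro y y' hyy
  by_contra hne
  obtain ⟨U, V, hU, hV, hyU, hyV, hUV⟩ := t2_separation hne
  have h1 : ε ⁻¹' U ∈ phiY ε y := ⟨U, hU, hyU, subset_rfl⟩
  have h2 : ε ⁻¹' V ∈ phiY ε y := hyy ▸ ⟨V, hV, hyV, subset_rfl⟩
  have h3 : ε ⁻¹' U ∩ ε ⁻¹' V ∈ phiY ε y := (phiY_isSetFilter hε).2.1 _ h1 _ h2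
  have h4 : ε ⁻¹' U ∩ ε ⁻¹' V = (∅ : Set X) := by
    rw [← Set.preimage_inter, Set.disjoint_iff_inter_eq_empty.mp hUV, Set.preimage_empty]
  exact (phiY_isSetFilter hε).2.2.2 (h4 ▸ h3)

lemma nhds_eq_phiY
    (hF : (F : Set (BoundedContinuousFunction X ℂ)) =
      {f : BoundedContinuousFunction X ℂ | ∃ h : C(Y, ℂ), ∀ x : X, f x = h (ε x)})
    (x : X) :
    {A : Set X | A ∈ @nhds X (tauF F) x} = phiY ε (ε x) := by
  ext A
  simp only [Set.mem_setOf_eq]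
  constructor
  · intro hA
    have hle : TopologicalSpace.induced ε ‹TopologicalSpace Y› ≤ tauF F := by
      refine le_iInf fun f => le_iInf fun hf => ?_
      rw [hF] at hf
      obtain ⟨h, hh⟩ := hf
      have hfe : (fun x' => f x') = (fun y => h y) ∘ ε := funext hh
      rw [hfe, ← induced_compose]
      exact induced_mono (continuous_iff_le_induced.mp h.continuous)
    obtain ⟨S, hSA, hSopen, hxS⟩ := (@mem_nhds_iff X (tauF F) x A).mp hA
    have hind : IsOpen[TopologicalSpace.induced ε ‹TopologicalSpace Y›] S :=
      hle S hSopen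
    obtain ⟨U, hU, hUS⟩ := isOpen_induced_iff.mp hind
    exact ⟨U, hU, by rw [← hUS] at hxS; exact hxS, hUS ▸ hSA⟩
  · rintro ⟨U, hU, hyU, hUA⟩
    obtain ⟨V, hV, hyV, hVU⟩ :=
      normal_exists_closure_subset (isClosed_singleton (x := ε x)) hU
        (Set.singleton_subset_iff.mpr hyU)
    obtain ⟨h, h0, h1⟩ := urysohnC (isClosed_closure (s := V)) hU.isClosed_compl
      (Set.disjoint_compl_right_iff_subset.mpr hVU)
    set f : BoundedContinuousFunction X ℂ :=
      (mkOfCompact h).compContinuous ⟨ε, continuous_of_discreteTopology⟩ with hfdef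
    have hfF : f ∈ (F : Set (BoundedContinuousFunction X ℂ)) := by
      rw [hF]; exact ⟨h, fun x' => rfl⟩
    have hle : tauF F ≤ TopologicalSpace.induced (fun x' => f x') inferInstance :=
      iInf₂_le f hfF
    have hopen : IsOpen[tauF F] ((fun x' => f x') ⁻¹' {(1 : ℂ)}ᶜ) :=
      hle _ ⟨{(1 : ℂ)}ᶜ, isOpen_compl_singleton, rfl⟩
    refine (@mem_nhds_iff X (tauF F) x A).mpr ⟨(fun x' => f x') ⁻¹' {(1 : ℂ)}ᶜ, ?_, hopen, ?_⟩
    · intro x' hx'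
      by_contra hxA
      have : ε x' ∈ Uᶜ := fun hU' => hxA (hUA hU')
      exact hx' (h1 _ this)
    · have : f x = 0 := h0 _ (subset_closure (hyV rfl))
      simp [Set.mem_preimage, this]

end Phi

theorem stmt15 {Y : Type*} [TopologicalSpace Y] [CompactSpace Y] [T2Space Y]
    (ε : X → Y) (hε : Dense (Set.range ε)) :
    ∃ F : StarSubalgebra ℂ (BoundedContinuousFunction X ℂ),
      (F : Set (BoundedContinuousFunction X ℂ)) = {f : BoundedContinuousFunction X ℂ | ∃ h : C(Y, ℂ), ∀ x : X, f x = h (ε x)} ∧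
      IsClosed (F : Set (BoundedContinuousFunction X ℂ)) ∧
      (∃ Φ : F ≃⋆ₐ[ℂ] C(Y, ℂ), ∀ f : F, ‖Φ f‖ = ‖(f : BoundedContinuousFunction X ℂ)‖) ∧
      ∀ e : X → Delta F, (∀ x : X, (e x).1 = {A : Set X | A ∈ @nhds X (tauF F) x}) →
        ∃ G : Delta F ≃ₜ Y, ∀ x : X, G (e x) = ε x := by
  classical
  have hF : (((psiHom ε).range : StarSubalgebra ℂ (BoundedContinuousFunction X ℂ)) :
      Set (BoundedContinuousFunction X ℂ)) =
      {f : BoundedContinuousFunction X ℂ | ∃ h : C(Y, ℂ), ∀ x : X, f x = h (ε x)} := by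
    ext f
    constructor
    · rintro ⟨h, rfl⟩
      exact ⟨h, fun x => rfl⟩
    · rintro ⟨h, hh⟩
      exact ⟨h, by ext x; exact (hh x).symm⟩
  have hinj : Function.Injective (psiHom ε) := (psiHom_isometry hε).injective
  refine ⟨(psiHom ε).range, hF, ?_, ?_, ?_⟩
  · have h1 : IsClosed (Set.range (psiHom ε)) :=
      (psiHom_isometry hε).isClosedEmbedding.isClosed_range
    have h2 : (((psiHom ε).range : StarSubalgebra ℂ (BoundedContinuousFunction X ℂ)) :
        Set (BoundedContinuousFunction X ℂ)) = Set.range (psiHom ε) := by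
      ext f
      exact ⟨fun ⟨h, hh⟩ => ⟨h, hh⟩, fun ⟨h, hh⟩ => ⟨h, hh⟩⟩
    rw [h2]
    exact h1
  · refine ⟨(StarAlgEquiv.ofInjective (psiHom ε) hinj).symm, fun f => ?_⟩
    have h1 : psiHom ε ((StarAlgEquiv.ofInjective (psiHom ε) hinj).symm f)
        = (f : BoundedContinuousFunction X ℂ) := by
      exact congrArg Subtype.val ((StarAlgEquiv.ofInjective (psiHom ε) hinj).apply_symm_apply f)
    rw [← h1, psiHom_norm hε]
  · intro e he
    have toDeltaP : ∀ y : Y, FUltrafilter (psiHom ε).range (phiY ε y) := fun y => phiY_ultra hF hε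
    set toDelta : Y → Delta (psiHom ε).range := fun y => ⟨phiY ε y, toDeltaP y⟩ with htD
    have hbij : Function.Bijective toDelta := by
      constructor
      · intro a b hab
        exact phiY_injective hε (congrArg Subtype.val hab)
      · intro p
        obtain ⟨y, hy⟩ := phiY_surjective hF hε p.2
        exact ⟨y, Subtype.ext hy⟩
    have hcont : Continuous toDelta := by
      refine continuous_generateFrom_iff.mpr ?_
      rintro S ⟨A, rfl⟩
      have hpre : toDelta ⁻¹' hatSet (psiHom ε).range A = {y : Y | A ∈ phiY ε y} := rfl
      rw [hpre]
      rw [isOpen_iff_mem_nhds]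
      rintro y ⟨U, hU, hyU, hUA⟩
      exact mem_nhds_iff.mpr ⟨U, fun y' hy' => ⟨U, hU, hy', hUA⟩, hU, hyU⟩
    haveI : T2Space (Delta (psiHom ε).range) := by
      constructor
      intro p q hpq
      obtain ⟨y, rfl⟩ := hbij.2 p
      obtain ⟨y', rfl⟩ := hbij.2 q
      have hyy : y ≠ y' := fun hc => hpq (by rw [hc])
      obtain ⟨U, V, hU, hV, hyU, hyV, hUV⟩ := t2_separation hyy
      refine ⟨hatSet (psiHom ε).range (ε ⁻¹' U), hatSet (psiHom ε).range (ε ⁻¹' V),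
        TopologicalSpace.isOpen_generateFrom_of_mem ⟨_, rfl⟩,
        TopologicalSpace.isOpen_generateFrom_of_mem ⟨_, rfl⟩,
        ⟨U, hU, hyU, subset_rfl⟩, ⟨V, hV, hyV, subset_rfl⟩, ?_⟩
      rw [Set.disjoint_left]
      rintro r h1 h2
      have h3 : ε ⁻¹' U ∩ ε ⁻¹' V ∈ r.1 := r.2.1.1.2.1 _ h1 _ h2
      have h4 : ε ⁻¹' U ∩ ε ⁻¹' V = (∅ : Set X) := by
        rw [← Set.preimage_inter, Set.disjoint_iff_inter_eq_empty.mp hUV, Set.preimage_empty]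
      exact r.2.1.1.2.2.2 (h4 ▸ h3)
    have hcontE : Continuous (Equiv.ofBijective toDelta hbij) := hcont
    refine ⟨(Continuous.homeoOfEquivCompactToT2 hcontE).symm, fun x => ?_⟩
    have hex : e x = toDelta (ε x) := by
      refine Subtype.ext ?_
      rw [he x]
      exact nhds_eq_phiY hF x
    rw [hex]
    have : toDelta (ε x) = (Continuous.homeoOfEquivCompactToT2 hcontE) (ε x) := rfl
    rw [this, Homeomorph.symm_apply_apply]
end

section
/- Let F₁ and F₂ be C*-subalgebras of ℓ∞(X) containing the constant functions, let δ₁X and δ₂X denote the spaces of F₁-ultrafilters and F₂-ultrafilters on X respectively, and let e₁ : X → δ₁X and e₂ : X → δ₂X be the respective evaluation maps. Then F₁ ⊆ F₂ if and only if there exists a continuous surjective mapping G : δ₂X → δ₁X such that e₁ = G ∘ e₂. -/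
open Set

variable {X : Type*} [Nonempty X] [TopologicalSpace X] [DiscreteTopology X]

set_option linter.unusedSectionVars false

section Aux

variable {F : StarSubalgebra ℂ (BoundedContinuousFunction X ℂ)}
variable {φ ψ : Set (Set X)} {f g : BoundedContinuousFunction X ℂ}

lemma IsSetFilter.univ_mem (h : IsSetFilter φ) : univ ∈ φ := by
  obtain ⟨A, hA⟩ := h.1
  exact h.2.2.1 A hA univ (subset_univ A)

lemma IsSetFilter.inter_mem (h : IsSetFilter φ) {A B : Set X} (hA : A ∈ φ) (hB : B ∈ φ) :
    A ∩ B ∈ φ := h.2.1 A hA B hB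

lemma IsSetFilter.superset_mem (h : IsSetFilter φ) {A B : Set X} (hA : A ∈ φ) (hAB : A ⊆ B) :
    B ∈ φ := h.2.2.1 A hA B hAB

lemma FFilter.isSetFilter (h : FFilter F φ) : IsSetFilter φ := h.1

lemma FFilter.nonempty_of_mem (h : FFilter F φ) {A : Set X} (hA : A ∈ φ) : A.Nonempty :=
  h.2.2.1 A hA

lemma FFilter.inter_nonempty (h : FFilter F φ) {A B : Set X} (hA : A ∈ φ) (hB : B ∈ φ) :
    (A ∩ B).Nonempty := h.nonempty_of_mem (h.1.inter_mem hA hB)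

lemma XSet.mono {r s : ℝ} (hrs : r ≤ s) : XSet f r ⊆ XSet f s := fun x hx => le_trans hx hrs

lemma mem_XSet {x : X} {r : ℝ} : x ∈ XSet f r ↔ ‖f x‖ ≤ r := Iff.rfl

/-- Evaluation at a point as an algebra homomorphism. -/
noncomputable def evalHomBCF (x : X) : BoundedContinuousFunction X ℂ →ₐ[ℂ] ℂ where
  toFun := fun u => u x
  map_one' := rfl
  map_mul' := fun _ _ => rfl
  map_zero' := rfl
  map_add' := fun _ _ => rfl
  commutes' := fun _ => rfl

/-- Key "functional calculus" lemma: a closed star subalgebra is stable under composing with a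
continuous function of `‖f x‖ ^ 2`. -/
lemma comp_sq_mem (hF : IsClosed (F : Set (BoundedContinuousFunction X ℂ))) (hf : f ∈ F)
    (ψ₀ : ℝ → ℝ) (hψ₀ : Continuous ψ₀) (g : BoundedContinuousFunction X ℂ)
    (hg : ∀ x, g x = (ψ₀ (‖f x‖ ^ 2) : ℂ)) : g ∈ F := by
  have hval : ∀ x, ‖f x‖ ^ 2 ∈ Icc (0 : ℝ) (‖f‖ ^ 2) := by
    intro x
    constructor
    · positivity
    · have := f.norm_coe_le_norm x
      nlinarith [norm_nonneg (f x)]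
  have key : g ∈ closure (F : Set (BoundedContinuousFunction X ℂ)) := by
    rw [Metric.mem_closure_iff]
    intro ε hε
    obtain ⟨P, hP⟩ := exists_polynomial_near_of_continuousOn 0 (‖f‖ ^ 2) ψ₀
      hψ₀.continuousOn (ε / 2) (by positivity)
    set u : BoundedContinuousFunction X ℂ := star f * f with hu_def
    have hu : u ∈ F := mul_mem (star_mem hf) hf
    have huval : ∀ x, u x = ((‖f x‖ ^ 2 : ℝ) : ℂ) := by
      intro x
      have : u x = star (f x) * f x := rfl
      rw [this]
      simp [RCLike.conj_mul]
    set Q : Polynomial ℂ := P.map (algebraMap ℝ ℂ) with hQ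
    set h : BoundedContinuousFunction X ℂ := Polynomial.aeval u Q with hh
    have hhF : h ∈ F := by
      have : (Polynomial.aeval u Q : BoundedContinuousFunction X ℂ)
          = F.subtype (Polynomial.aeval (⟨u, hu⟩ : F) Q) := by
        rw [← Polynomial.aeval_algHom_apply]
        rfl
      rw [hh, this]
      exact (Polynomial.aeval (⟨u, hu⟩ : F) Q).2
    have hhval : ∀ x, h x = ((P.eval (‖f x‖ ^ 2) : ℝ) : ℂ) := by
      intro x
      have h1 : h x = (evalHomBCF x) (Polynomial.aeval u Q) := rfl
      rw [h1, ← Polynomial.aeval_algHom_apply]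
      have h2 : (evalHomBCF x) u = ((‖f x‖ ^ 2 : ℝ) : ℂ) := huval x
      rw [h2, hQ, Polynomial.aeval_map_algebraMap]
      have := Polynomial.aeval_algebraMap_apply ℂ ((‖f x‖ ^ 2 : ℝ)) P
      simpa using this
    refine ⟨h, hhF, ?_⟩
    have : dist g h ≤ ε / 2 := by
      apply BoundedContinuousFunction.dist_le (by positivity) |>.mpr
      intro x
      rw [hg x, hhval x]
      rw [Complex.dist_eq]
      have : ((ψ₀ (‖f x‖ ^ 2) : ℂ)) - ((P.eval (‖f x‖ ^ 2) : ℝ) : ℂ)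
          = ((ψ₀ (‖f x‖ ^ 2) - P.eval (‖f x‖ ^ 2) : ℝ) : ℂ) := by push_cast; ring
      rw [this, Complex.norm_real, Real.norm_eq_abs]
      have := hP _ (hval x)
      rw [abs_sub_comm]
      linarith [le_of_lt this]
    linarith [hε, this]
  rwa [hF.closure_eq] at key

end Aux

section Aux2
set_option linter.unusedVariables false

variable {F : StarSubalgebra ℂ (BoundedContinuousFunction X ℂ)}
variable {φ ψ : Set (Set X)} {f g : BoundedContinuousFunction X ℂ}

/-- Existence of a "separating bump": a member of `F` which is `0` where `‖f‖ ≤ a`,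
`1` where `‖f‖ ≥ b`, with real values in `[0,1]`. -/
lemma exists_sep (hF : IsClosed (F : Set (BoundedContinuousFunction X ℂ))) (hf : f ∈ F)
    {a b : ℝ} (h0 : 0 ≤ a) (hab : a < b) :
    ∃ g : BoundedContinuousFunction X ℂ, g ∈ F ∧
      (∀ x, ∃ t : ℝ, 0 ≤ t ∧ t ≤ 1 ∧ g x = (t : ℂ)) ∧
      (∀ x, ‖f x‖ ≤ a → g x = 0) ∧ (∀ x, b ≤ ‖f x‖ → g x = 1) := by
  set ψ₀ : ℝ → ℝ := fun t => max 0 (min ((Real.sqrt t - a) / (b - a)) 1) with hψ₀def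
  have hψ₀ : Continuous ψ₀ := by
    apply continuous_const.max
    exact (((Real.continuous_sqrt.sub continuous_const).div_const _).min continuous_const)
  set g : BoundedContinuousFunction X ℂ :=
    BoundedContinuousFunction.ofNormedAddCommGroup
      (fun x => (ψ₀ (‖f x‖ ^ 2) : ℂ)) (continuous_of_discreteTopology) 1
      (by
        intro x
        rw [Complex.norm_real, Real.norm_eq_abs, abs_le]
        constructor
        · have : (0:ℝ) ≤ ψ₀ (‖f x‖ ^ 2) := le_max_left _ _
          linarith
        · exact max_le (by norm_num) (min_le_right _ _)) with hgdef
  have hgx : ∀ x, g x = (ψ₀ (‖f x‖ ^ 2) : ℂ) := fun x => rfl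
  have hsqrt : ∀ x : X, Real.sqrt (‖f x‖ ^ 2) = ‖f x‖ := fun x =>
    Real.sqrt_sq (norm_nonneg _)
  refine ⟨g, comp_sq_mem hF hf ψ₀ hψ₀ g hgx, ?_, ?_, ?_⟩
  · intro x
    refine ⟨ψ₀ (‖f x‖ ^ 2), le_max_left _ _, max_le (by norm_num) (min_le_right _ _), hgx x⟩
  · intro x hx
    rw [hgx x]
    have : ψ₀ (‖f x‖ ^ 2) = 0 := by
      have h1 : (‖f x‖ - a) / (b - a) ≤ 0 :=
        div_nonpos_of_nonpos_of_nonneg (by linarith) (by linarith)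
      rw [hψ₀def]
      simp only [hsqrt x]
      have : min ((‖f x‖ - a) / (b - a)) 1 ≤ 0 := le_trans (min_le_left _ _) h1
      rw [max_eq_left this]
    rw [this]; norm_num
  · intro x hx
    rw [hgx x]
    have : ψ₀ (‖f x‖ ^ 2) = 1 := by
      have h1 : (1:ℝ) ≤ (‖f x‖ - a) / (b - a) := by
        rw [le_div_iff₀ (by linarith)]
        linarith
      rw [hψ₀def]
      simp only [hsqrt x]
      rw [min_eq_right h1, max_eq_right (by norm_num : (0:ℝ) ≤ 1)]
    rw [this]; norm_num

/-- Combination of two `[0,1]`-valued members: `g₁ + g₂ - g₁ * g₂`. -/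
lemma exists_combine {g₁ g₂ : BoundedContinuousFunction X ℂ} (hg₁ : g₁ ∈ F) (hg₂ : g₂ ∈ F)
    (h₁ : ∀ x, ∃ t : ℝ, 0 ≤ t ∧ t ≤ 1 ∧ g₁ x = (t : ℂ))
    (h₂ : ∀ x, ∃ t : ℝ, 0 ≤ t ∧ t ≤ 1 ∧ g₂ x = (t : ℂ)) :
    ∃ g : BoundedContinuousFunction X ℂ, g ∈ F ∧
      (∀ x, g₁ x = 0 → g₂ x = 0 → g x = 0) ∧
      (∀ x, (g₁ x = 1 ∨ g₂ x = 1) → g x = 1) := by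
  refine ⟨g₁ + g₂ - g₁ * g₂, sub_mem (add_mem hg₁ hg₂) (mul_mem hg₁ hg₂), ?_, ?_⟩
  · intro x hx1 hx2
    have : (g₁ + g₂ - g₁ * g₂) x = g₁ x + g₂ x - g₁ x * g₂ x := rfl
    rw [this, hx1, hx2]; ring
  · intro x hx
    have hv : (g₁ + g₂ - g₁ * g₂) x = g₁ x + g₂ x - g₁ x * g₂ x := rfl
    rcases hx with hx | hx
    · rw [hv, hx]; ring
    · rw [hv, hx]; ring

/-- Zorn: every `F`-filter contained in a given collection `Φ` that contains arbitrary unions of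
chains extends to a maximal one. We only need two instances; state it generally. -/
lemma exists_maximal_ffilter (Φ : Set (Set X)) (hφΦ : φ ⊆ Φ) (hφ : FFilter F φ) :
    ∃ m, FFilter F m ∧ m ⊆ Φ ∧ φ ⊆ m ∧
      ∀ ψ, FFilter F ψ → ψ ⊆ Φ → m ⊆ ψ → ψ = m := by
  set S : Set (Set (Set X)) := {ψ | FFilter F ψ ∧ ψ ⊆ Φ} with hS
  have hzorn := zorn_subset_nonempty S ?_ φ ⟨hφ, hφΦ⟩
  · obtain ⟨m, hφm, hmS, hmax⟩ := hzorn
    exact ⟨m, hmS.1, hmS.2, hφm, fun ψ hψ hψΦ hmψ => subset_antisymm (hmax ⟨hψ, hψΦ⟩ hmψ) hmψ⟩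
  · intro c hcS hchain hcne
    refine ⟨⋃₀ c, ⟨⟨⟨?_, ?_, ?_, ?_⟩, ?_, ?_, ?_⟩, ?_⟩, fun s hs => subset_sUnion_of_mem hs⟩
    · obtain ⟨ψ₀, hψ₀⟩ := hcne
      obtain ⟨A, hA⟩ := (hcS hψ₀).1.1.1
      exact ⟨A, ψ₀, hψ₀, hA⟩
    · rintro A ⟨ψa, hψa, hAa⟩ B ⟨ψb, hψb, hBb⟩
      rcases hchain.total hψa hψb with h | h
      · exact ⟨ψb, hψb, (hcS hψb).1.1.2.1 A (h hAa) B hBb⟩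
      · exact ⟨ψa, hψa, (hcS hψa).1.1.2.1 A hAa B (h hBb)⟩
    · rintro A ⟨ψa, hψa, hAa⟩ B hAB
      exact ⟨ψa, hψa, (hcS hψa).1.1.2.2.1 A hAa B hAB⟩
    · rintro ⟨ψa, hψa, hAa⟩
      exact (hcS hψa).1.1.2.2.2 hAa
    · obtain ⟨ψ₀, hψ₀⟩ := hcne
      obtain ⟨A, hA⟩ := (hcS hψ₀).1.1.1
      exact ⟨A, ψ₀, hψ₀, hA⟩
    · rintro A ⟨ψa, hψa, hAa⟩
      exact (hcS hψa).1.2.2.1 A hAa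
    · rintro A ⟨ψa, hψa, hAa⟩ hAne
      obtain ⟨B, hB, f, hfF, hf0, hf1⟩ := (hcS hψa).1.2.2.2 A hAa hAne
      exact ⟨B, ⟨ψa, hψa, hB⟩, f, hfF, hf0, hf1⟩
    · rintro A ⟨ψa, hψa, hAa⟩
      exact (hcS hψa).2 hAa

/-- Every `F`-filter extends to an `F`-ultrafilter. -/
lemma exists_ultrafilter_ge (hφ : FFilter F φ) : ∃ p, FUltrafilter F p ∧ φ ⊆ p := by
  obtain ⟨m, hm, -, hφm, hmax⟩ := exists_maximal_ffilter univ (subset_univ _) hφ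
  exact ⟨m, ⟨hm, fun ψ hψ hmψ => hmax ψ hψ (subset_univ _) hmψ⟩, hφm⟩

end Aux2

section Aux3
set_option linter.unusedVariables false

variable {F : StarSubalgebra ℂ (BoundedContinuousFunction X ℂ)}
variable {φ ψ : Set (Set X)} {f g : BoundedContinuousFunction X ℂ}

/-- The extension of an `F`-filter by the sets `X(f,s)`, `s > r`, is again an `F`-filter,
provided all the relevant intersections are nonempty. -/
lemma filter_extend (hF : IsClosed (F : Set (BoundedContinuousFunction X ℂ)))
    (hφ : FFilter F φ) (hf : f ∈ F) {r : ℝ} (hr : 0 ≤ r)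
    (hne : ∀ A ∈ φ, ∀ s, r < s → (A ∩ XSet f s).Nonempty) :
    FFilter F {C | ∃ A ∈ φ, ∃ s, r < s ∧ A ∩ XSet f s ⊆ C} ∧
      φ ⊆ {C | ∃ A ∈ φ, ∃ s, r < s ∧ A ∩ XSet f s ⊆ C} ∧
      ∀ s, r < s → XSet f s ∈ {C | ∃ A ∈ φ, ∃ s, r < s ∧ A ∩ XSet f s ⊆ C} := by
  set ψ' : Set (Set X) := {C | ∃ A ∈ φ, ∃ s, r < s ∧ A ∩ XSet f s ⊆ C} with hψ'
  have hφψ : φ ⊆ ψ' := fun C hC =>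
    ⟨C, hC, r + 1, by linarith, inter_subset_left⟩
  have hXs : ∀ s, r < s → XSet f s ∈ ψ' := fun s hs =>
    ⟨univ, hφ.1.univ_mem, s, hs, fun x hx => hx.2⟩
  refine ⟨⟨⟨?_, ?_, ?_, ?_⟩, ?_, ?_, ?_⟩, hφψ, hXs⟩
  · exact ⟨univ, hφψ hφ.1.univ_mem⟩
  · rintro C ⟨A, hA, s, hs, hsub⟩ C' ⟨A', hA', s', hs', hsub'⟩
    refine ⟨A ∩ A', hφ.1.inter_mem hA hA', min s s', lt_min hs hs', ?_⟩
    rintro x ⟨⟨hxA, hxA'⟩, hxX⟩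
    exact ⟨hsub ⟨hxA, mem_XSet.mpr (le_trans (mem_XSet.mp hxX) (min_le_left _ _))⟩,
      hsub' ⟨hxA', mem_XSet.mpr (le_trans (mem_XSet.mp hxX) (min_le_right _ _))⟩⟩
  · rintro C ⟨A, hA, s, hs, hsub⟩ B hCB
    exact ⟨A, hA, s, hs, hsub.trans hCB⟩
  · rintro ⟨A, hA, s, hs, hsub⟩
    obtain ⟨x, hx⟩ := hne A hA s hs
    exact hsub hx
  · exact ⟨univ, hφψ hφ.1.univ_mem⟩
  · rintro C ⟨A, hA, s, hs, hsub⟩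
    exact (hne A hA s hs).mono hsub
  · rintro C ⟨A, hA, s, hs, hsub⟩ hCne
    -- separating function for `A` (or the zero function if `A = univ`)
    obtain ⟨B, hBφ, g₁, hg₁F, hg₁v, hg₁0, hg₁1⟩ :
        ∃ B ∈ φ, ∃ g₁, g₁ ∈ F ∧ (∀ x, ∃ t : ℝ, 0 ≤ t ∧ t ≤ 1 ∧ g₁ x = (t : ℂ)) ∧
          (∀ x ∈ B, g₁ x = 0) ∧ (∀ x ∉ A, g₁ x = 1) := by
      by_cases hA_univ : A = univ
      · refine ⟨univ, hφ.1.univ_mem, 0, zero_mem F, ?_, fun x _ => rfl, ?_⟩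
        · intro x; exact ⟨0, le_refl 0, by norm_num, by norm_num⟩
        · intro x hx; exact absurd (hA_univ ▸ mem_univ x) hx
      · obtain ⟨B, hB, f₁, hf₁F, hf₁0, hf₁1⟩ := hφ.2.2.2 A hA hA_univ
        obtain ⟨g₁, hg₁F, hg₁v, hg₁0', hg₁1'⟩ :=
          exists_sep hF hf₁F (le_refl (0:ℝ)) (by norm_num : (0:ℝ) < 1)
        refine ⟨B, hB, g₁, hg₁F, hg₁v, ?_, ?_⟩
        · intro x hx
          exact hg₁0' x (by rw [hf₁0 x hx]; simp)
        · intro x hx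
          exact hg₁1' x (by rw [hf₁1 x hx]; simp)
    -- second bump for `X(f,s)`
    set s' : ℝ := (r + s) / 2 with hs'def
    have hrs' : r < s' := by rw [hs'def]; linarith
    have hs's : s' < s := by rw [hs'def]; linarith
    obtain ⟨g₂, hg₂F, hg₂v, hg₂0, hg₂1⟩ := exists_sep hF hf (le_trans hr (le_of_lt hrs')) hs's
    obtain ⟨g, hgF, hg0, hg1⟩ := exists_combine hg₁F hg₂F hg₁v hg₂v
    refine ⟨B ∩ XSet f s', ⟨B, hBφ, s', hrs', Subset.rfl⟩, g, hgF, ?_, ?_⟩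
    · rintro x ⟨hxB, hxX⟩
      exact hg0 x (hg₁0 x hxB) (hg₂0 x hxX)
    · intro x hxC
      have hx' : x ∉ A ∩ XSet f s := fun hx => hxC (hsub hx)
      by_cases hxA : x ∈ A
      · have hxX : x ∉ XSet f s := fun hx => hx' ⟨hxA, hx⟩
        exact hg1 x (Or.inr (hg₂1 x (le_of_lt (lt_of_not_ge hxX))))
      · exact hg1 x (Or.inl (hg₁1 x hxA))

/-- Key lemma: if `X(f,r)` meets every member of an `F`-ultrafilter `p`, then `X(f,s) ∈ p`
for every `s > r`. -/
lemma ultra_push (hF : IsClosed (F : Set (BoundedContinuousFunction X ℂ)))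
    {p : Set (Set X)} (hp : FUltrafilter F p) (hf : f ∈ F) {r : ℝ} (hr : 0 ≤ r)
    (hne : ∀ A ∈ p, (A ∩ XSet f r).Nonempty) :
    ∀ s, r < s → XSet f s ∈ p := by
  have hne' : ∀ A ∈ p, ∀ s, r < s → (A ∩ XSet f s).Nonempty := fun A hA s hs =>
    (hne A hA).mono (inter_subset_inter_right A (XSet.mono (le_of_lt hs)))
  obtain ⟨hFF, hsub, hXs⟩ := filter_extend hF hp.1 hf hr hne'
  have := hp.2 _ hFF hsub
  intro s hs
  rw [← this]
  exact hXs s hs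

end Aux3

section Aux4
set_option linter.unusedVariables false

variable {F : StarSubalgebra ℂ (BoundedContinuousFunction X ℂ)}
variable {φ ψ : Set (Set X)} {f g : BoundedContinuousFunction X ℂ} {z w : ℂ}

lemma const_mem (z : ℂ) : BoundedContinuousFunction.const X z ∈ F := by
  have h := algebraMap_mem F z
  have : algebraMap ℂ (BoundedContinuousFunction X ℂ) z = BoundedContinuousFunction.const X z := by
    ext x
    simp [BoundedContinuousFunction.algebraMap_apply, smul_eq_mul]
  rwa [this] at h

lemma mem_XSet_sub {x : X} {r : ℝ} :
    x ∈ XSet (f - BoundedContinuousFunction.const X z) r ↔ ‖f x - z‖ ≤ r := by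
  simp [XSet]

/-- `z` is the limit of `f` along the filter `φ`. -/
def IsLimVal (φ : Set (Set X)) (f : BoundedContinuousFunction X ℂ) (z : ℂ) : Prop :=
  ∀ ε : ℝ, 0 < ε → XSet (f - BoundedContinuousFunction.const X z) ε ∈ φ

lemma islim_unique (hφ : IsSetFilter φ) (hne : ∀ A ∈ φ, A.Nonempty)
    (h1 : IsLimVal φ f z) (h2 : IsLimVal φ f w) : z = w := by
  by_contra hzw
  have hd : 0 < ‖z - w‖ / 3 := by
    have : z - w ≠ 0 := sub_ne_zero.mpr hzw
    have := norm_pos_iff.mpr this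
    linarith
  obtain ⟨x, hx1, hx2⟩ := hne _ (hφ.inter_mem (h1 _ hd) (h2 _ hd))
  have e1 : ‖f x - z‖ ≤ ‖z - w‖ / 3 := mem_XSet_sub.mp hx1
  have e2 : ‖f x - w‖ ≤ ‖z - w‖ / 3 := mem_XSet_sub.mp hx2
  have : ‖z - w‖ ≤ ‖f x - z‖ + ‖f x - w‖ := by
    calc ‖z - w‖ = ‖(f x - w) - (f x - z)‖ := by ring_nf
      _ ≤ ‖f x - w‖ + ‖f x - z‖ := norm_sub_le _ _
      _ = ‖f x - z‖ + ‖f x - w‖ := by ring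
  linarith

/-- The filter associated to an `IsSetFilter`. -/
def mkFilter (hφ : IsSetFilter φ) : Filter X where
  sets := φ
  univ_sets := hφ.univ_mem
  sets_of_superset := fun hA hAB => hφ.superset_mem hA hAB
  inter_sets := fun hA hB => hφ.inter_mem hA hB

lemma islim_exists (hF : IsClosed (F : Set (BoundedContinuousFunction X ℂ)))
    {p : Set (Set X)} (hp : FUltrafilter F p) (hf : f ∈ F) : ∃ z, IsLimVal p f z := by
  set 𝔽 : Filter X := mkFilter hp.1.1 with h𝔽
  have hmem𝔽 : ∀ {A : Set X}, A ∈ 𝔽 ↔ A ∈ p := Iff.rfl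
  haveI hNB : 𝔽.NeBot := by
    refine Filter.neBot_iff.mpr (fun hbot => ?_)
    have : (∅ : Set X) ∈ 𝔽 := hbot ▸ Filter.mem_bot
    exact hp.1.1.2.2.2 (hmem𝔽.mp this)
  set 𝔾 : Filter ℂ := 𝔽.map f with h𝔾
  have h𝔾P : 𝔾 ≤ Filter.principal (Metric.closedBall (0:ℂ) ‖f‖) := by
    rw [Filter.le_principal_iff, Filter.mem_map]
    have : (f : X → ℂ) ⁻¹' Metric.closedBall 0 ‖f‖ = univ := by
      ext x
      simp only [mem_preimage, Metric.mem_closedBall, dist_zero_right, mem_univ, iff_true]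
      exact f.norm_coe_le_norm x
    rw [this]
    exact hmem𝔽.mpr hp.1.1.univ_mem
  obtain ⟨z, hz, hcl⟩ := (isCompact_closedBall (0:ℂ) ‖f‖).exists_clusterPt h𝔾P
  refine ⟨z, ?_⟩
  intro ε hε
  have claim : ∀ A ∈ p, (A ∩ XSet (f - BoundedContinuousFunction.const X z) (ε/2)).Nonempty := by
    intro A hA
    have hU : Metric.ball z (ε/2) ∈ nhds z := Metric.ball_mem_nhds z (by linarith)
    have hV : (f : X → ℂ) '' A ∈ 𝔾 := by
      rw [h𝔾, Filter.mem_map]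
      exact hp.1.1.superset_mem hA (subset_preimage_image _ _)
    obtain ⟨y, hy1, hy2⟩ := clusterPt_iff_nonempty.mp hcl hU hV
    obtain ⟨x, hxA, hxy⟩ := hy2
    refine ⟨x, hxA, mem_XSet_sub.mpr ?_⟩
    rw [hxy]
    have := Metric.mem_ball.mp hy1
    rw [dist_eq_norm] at this
    linarith
  exact ultra_push hF hp (sub_mem hf (const_mem z)) (by linarith) claim ε (by linarith)

/-- The limit value of `f` along `φ`. -/
noncomputable def limval (φ : Set (Set X)) (f : BoundedContinuousFunction X ℂ) : ℂ :=
  Classical.epsilon (IsLimVal φ f)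

lemma IsLimVal.limval_eq (hφ : IsSetFilter φ) (hne : ∀ A ∈ φ, A.Nonempty)
    (h : IsLimVal φ f z) : limval φ f = z :=
  islim_unique hφ hne (Classical.epsilon_spec (⟨z, h⟩ : ∃ w, IsLimVal φ f w)) h

lemma limval_spec (hF : IsClosed (F : Set (BoundedContinuousFunction X ℂ)))
    {p : Set (Set X)} (hp : FUltrafilter F p) (hf : f ∈ F) : IsLimVal p f (limval p f) :=
  Classical.epsilon_spec (islim_exists hF hp hf)

lemma islim_const (hφ : IsSetFilter φ) (c : ℂ) :
    IsLimVal φ (BoundedContinuousFunction.const X c) c := by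
  intro ε hε
  refine hφ.superset_mem hφ.univ_mem (fun x _ => mem_XSet_sub.mpr ?_)
  simpa using le_of_lt hε

lemma islim_add (hφ : IsSetFilter φ) (h1 : IsLimVal φ f z) (h2 : IsLimVal φ g w) :
    IsLimVal φ (f + g) (z + w) := by
  intro ε hε
  refine hφ.superset_mem (hφ.inter_mem (h1 (ε/2) (by linarith)) (h2 (ε/2) (by linarith))) ?_
  rintro x ⟨hx1, hx2⟩
  rw [mem_XSet_sub] at hx1 hx2 ⊢
  have heq : (f + g) x - (z + w) = (f x - z) + (g x - w) := by
    have : (f + g) x = f x + g x := rfl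
    rw [this]; ring
  rw [heq]
  calc ‖(f x - z) + (g x - w)‖ ≤ ‖f x - z‖ + ‖g x - w‖ := norm_add_le _ _
    _ ≤ ε/2 + ε/2 := add_le_add hx1 hx2
    _ = ε := by ring

lemma islim_neg (hφ : IsSetFilter φ) (h1 : IsLimVal φ f z) : IsLimVal φ (-f) (-z) := by
  intro ε hε
  refine hφ.superset_mem (h1 ε hε) ?_
  intro x hx
  rw [mem_XSet_sub] at hx ⊢
  have : (-f) x - (-z) = -(f x - z) := by
    have : (-f) x = -(f x) := rfl
    rw [this]; ring
  rw [this, norm_neg]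
  exact hx

lemma islim_sub (hφ : IsSetFilter φ) (h1 : IsLimVal φ f z) (h2 : IsLimVal φ g w) :
    IsLimVal φ (f - g) (z - w) := by
  have := islim_add hφ h1 (islim_neg hφ h2)
  have heq : f + -g = f - g := by ring
  rw [heq] at this
  rw [show z + -w = z - w by ring] at this
  exact this

lemma islim_star (hφ : IsSetFilter φ) (h1 : IsLimVal φ f z) :
    IsLimVal φ (star f) ((starRingEnd ℂ) z) := by
  intro ε hε
  refine hφ.superset_mem (h1 ε hε) ?_
  intro x hx
  rw [mem_XSet_sub] at hx ⊢
  have h2 : (star f) x = (starRingEnd ℂ) (f x) := rfl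
  rw [h2, ← map_sub, RCLike.norm_conj]
  exact hx

lemma islim_mul (hφ : IsSetFilter φ) (h1 : IsLimVal φ f z) (h2 : IsLimVal φ g w) :
    IsLimVal φ (f * g) (z * w) := by
  intro ε hε
  set δ : ℝ := min 1 (ε / (‖g‖ + ‖z‖ + 1)) with hδdef
  have hgz : (0:ℝ) < ‖g‖ + ‖z‖ + 1 := by positivity
  have hδ : 0 < δ := lt_min (by norm_num) (by positivity)
  refine hφ.superset_mem (hφ.inter_mem (h1 δ hδ) (h2 δ hδ)) ?_
  rintro x ⟨hx1, hx2⟩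
  rw [mem_XSet_sub] at hx1 hx2 ⊢
  have hfg : (f * g) x = f x * g x := rfl
  have key : f x * g x - z * w = (f x - z) * g x + z * (g x - w) := by ring
  rw [hfg, key]
  have hb1 : ‖(f x - z) * g x‖ ≤ δ * ‖g‖ := by
    rw [norm_mul]
    exact mul_le_mul hx1 (g.norm_coe_le_norm x) (norm_nonneg _) (le_of_lt hδ)
  have hb2 : ‖z * (g x - w)‖ ≤ ‖z‖ * δ := by
    rw [norm_mul]
    exact mul_le_mul_of_nonneg_left hx2 (norm_nonneg _)
  have hδ2 : δ ≤ ε / (‖g‖ + ‖z‖ + 1) := min_le_right _ _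
  calc ‖(f x - z) * g x + z * (g x - w)‖ ≤ ‖(f x - z) * g x‖ + ‖z * (g x - w)‖ := norm_add_le _ _
    _ ≤ δ * ‖g‖ + ‖z‖ * δ := by linarith
    _ = δ * (‖g‖ + ‖z‖) := by ring
    _ ≤ (ε / (‖g‖ + ‖z‖ + 1)) * (‖g‖ + ‖z‖) := by
        apply mul_le_mul_of_nonneg_right hδ2
        positivity
    _ ≤ ε := by
        rw [div_mul_eq_mul_div, div_le_iff₀ hgz]
        nlinarith [norm_nonneg g, norm_nonneg z]

lemma islim_norm_le (hne : ∀ A ∈ φ, A.Nonempty) (h : IsLimVal φ f z) : ‖z‖ ≤ ‖f‖ := by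
  refine le_of_forall_pos_le_add (fun ε hε => ?_)
  obtain ⟨x, hx⟩ := hne _ (h ε hε)
  rw [mem_XSet_sub] at hx
  calc ‖z‖ = ‖f x - (f x - z)‖ := by ring_nf
    _ ≤ ‖f x‖ + ‖f x - z‖ := norm_sub_le _ _
    _ ≤ ‖f‖ + ε := add_le_add (f.norm_coe_le_norm x) hx

end Aux4

section Aux5
set_option linter.unusedVariables false

variable {F : StarSubalgebra ℂ (BoundedContinuousFunction X ℂ)}
variable {f g : BoundedContinuousFunction X ℂ} {z w : ℂ} {A B : Set X}

lemma Delta.prop (p : Delta F) : FUltrafilter F p.1 := p.2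

lemma Delta.ffilter (p : Delta F) : FFilter F p.1 := p.2.1

lemma Delta.isSetFilter (p : Delta F) : IsSetFilter p.1 := p.2.1.1

lemma Delta.nonempty_mem (p : Delta F) : ∀ A ∈ p.1, A.Nonempty := p.2.1.2.2.1

lemma mem_hatSet {p : Delta F} : p ∈ hatSet F A ↔ A ∈ p.1 := Iff.rfl

lemma isOpen_hatSet (A : Set X) : IsOpen (hatSet F A) :=
  TopologicalSpace.isOpen_generateFrom_of_mem ⟨A, rfl⟩

lemma hatSet_inter : hatSet F (A ∩ B) = hatSet F A ∩ hatSet F B := by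
  ext p
  constructor
  · intro h
    exact ⟨p.isSetFilter.superset_mem h inter_subset_left,
      p.isSetFilter.superset_mem h inter_subset_right⟩
  · rintro ⟨h1, h2⟩
    exact p.isSetFilter.inter_mem h1 h2

lemma hatSet_univ : hatSet F univ = univ := by
  ext p
  simp only [mem_univ, iff_true, mem_hatSet]
  exact p.isSetFilter.univ_mem

lemma delta_basis :
    TopologicalSpace.IsTopologicalBasis {S : Set (Delta F) | ∃ A : Set X, S = hatSet F A} where
  exists_subset_inter := by
    rintro t₁ ⟨A, rfl⟩ t₂ ⟨B, rfl⟩ p hp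
    refine ⟨hatSet F (A ∩ B), ⟨A ∩ B, rfl⟩, ?_, ?_⟩
    · rw [hatSet_inter]; exact hp
    · rw [hatSet_inter]
  sUnion_eq := by
    apply subset_antisymm (subset_univ _)
    intro p _
    refine mem_sUnion.mpr ⟨hatSet F univ, ⟨univ, rfl⟩, ?_⟩
    rw [hatSet_univ]
    exact mem_univ p
  eq_generateFrom := rfl

lemma delta_mem_nhds {p : Delta F} {s : Set (Delta F)} :
    s ∈ nhds p ↔ ∃ A : Set X, A ∈ p.1 ∧ hatSet F A ⊆ s := by
  rw [delta_basis.mem_nhds_iff]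
  constructor
  · rintro ⟨t, ⟨A, rfl⟩, hpt, hts⟩
    exact ⟨A, hpt, hts⟩
  · rintro ⟨A, hA, hsub⟩
    exact ⟨hatSet F A, ⟨A, rfl⟩, hA, hsub⟩

/-- The extension of `f` to `Delta F` is continuous. -/
lemma continuous_limval (hF : IsClosed (F : Set (BoundedContinuousFunction X ℂ))) (hf : f ∈ F) :
    Continuous (fun p : Delta F => limval p.1 f) := by
  rw [continuous_iff_continuousAt]
  intro p
  rw [ContinuousAt, Metric.tendsto_nhds]
  intro ε hε
  set z := limval p.1 f with hz
  have hspec := limval_spec hF p.prop hf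
  rw [Filter.eventually_iff, delta_mem_nhds]
  refine ⟨XSet (f - BoundedContinuousFunction.const X z) (ε/3), hspec (ε/3) (by linarith), ?_⟩
  intro q hq
  have hq' := limval_spec hF q.prop hf (ε/3) (by linarith)
  obtain ⟨x, hx1, hx2⟩ := q.nonempty_mem _ (q.isSetFilter.inter_mem hq' hq)
  rw [mem_XSet_sub] at hx1 hx2
  simp only [mem_setOf_eq]
  rw [dist_eq_norm]
  calc ‖limval q.1 f - z‖ = ‖(f x - z) - (f x - limval q.1 f)‖ := by ring_nf
    _ ≤ ‖f x - z‖ + ‖f x - limval q.1 f‖ := norm_sub_le _ _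
    _ ≤ ε/3 + ε/3 := add_le_add hx2 hx1
    _ < ε := by linarith

/-- Distinct ultrafilters have some member of one disjoint from a member of the other. -/
lemma delta_sep (hF : IsClosed (F : Set (BoundedContinuousFunction X ℂ))) {p q : Delta F}
    (hpq : p ≠ q) :
    ∃ f₀ ∈ F, ∃ B ∈ p.1, ∃ C ∈ q.1,
      (∀ x, ∃ t : ℝ, 0 ≤ t ∧ t ≤ 1 ∧ f₀ x = (t : ℂ)) ∧
      (∀ x ∈ B, f₀ x = 0) ∧ B ⊆ XSet f₀ (1/4) ∧ C ∩ XSet f₀ (1/4) = ∅ := by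
  -- find a member of `p` not in `q`
  have hne : ∃ A ∈ p.1, A ∉ q.1 := by
    by_contra h
    push_neg at h
    exact hpq (Subtype.ext ((p.prop.2 q.1 q.prop.1 (fun A hA => h A hA)).symm))
  obtain ⟨A, hAp, hAq⟩ := hne
  have hAuniv : A ≠ univ := fun h => hAq (h ▸ q.isSetFilter.univ_mem)
  obtain ⟨B, hB, f₁, hf₁F, hf₁0, hf₁1⟩ := p.prop.1.2.2.2 A hAp hAuniv
  obtain ⟨f₀, hf₀F, hf₀v, hf₀0, hf₀1⟩ :=
    exists_sep hF hf₁F (le_refl (0:ℝ)) (by norm_num : (0:ℝ) < 1)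
  have hf₀B : ∀ x ∈ B, f₀ x = 0 := fun x hx => hf₀0 x (by rw [hf₁0 x hx]; simp)
  have hf₀A : ∀ x ∉ A, f₀ x = 1 := fun x hx => hf₀1 x (by rw [hf₁1 x hx]; simp)
  -- `X(f₀, 1/2) ∉ q`, else `A ∈ q`.
  have hXq : ∃ C ∈ q.1, C ∩ XSet f₀ (1/4) = ∅ := by
    by_contra h
    push_neg at h
    have hne' : ∀ C ∈ q.1, (C ∩ XSet f₀ (1/4)).Nonempty := h
    have := ultra_push hF q.prop hf₀F (by norm_num) hne' (1/2) (by norm_num)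
    have hsub : XSet f₀ (1/2) ⊆ A := by
      intro x hx
      by_contra hxA
      have := hf₀A x hxA
      rw [mem_XSet, this] at hx
      norm_num at hx
    exact hAq (q.isSetFilter.superset_mem this hsub)
  obtain ⟨C, hCq, hC⟩ := hXq
  refine ⟨f₀, hf₀F, B, hB, C, hCq, hf₀v, hf₀B, ?_, hC⟩
  intro x hx
  rw [mem_XSet, hf₀B x hx]
  norm_num

lemma delta_t2 (hF : IsClosed (F : Set (BoundedContinuousFunction X ℂ))) :
    T2Space (Delta F) := by
  constructor
  intro p q hpq
  obtain ⟨f₀, hf₀F, B, hB, C, hCq, hv, hB0, hBsub, hC⟩ := delta_sep hF hpq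
  refine ⟨hatSet F B, hatSet F C, isOpen_hatSet B, isOpen_hatSet C, hB, hCq, ?_⟩
  rw [Set.disjoint_iff]
  rintro r ⟨hrB, hrC⟩
  obtain ⟨x, hx1, hx2⟩ := r.nonempty_mem _ (r.isSetFilter.inter_mem hrB hrC)
  have : x ∈ C ∩ XSet f₀ (1/4) := ⟨hx2, hBsub hx1⟩
  rw [hC] at this
  exact this

end Aux5

section Aux6
set_option linter.unusedVariables false

variable {F : StarSubalgebra ℂ (BoundedContinuousFunction X ℂ)}
variable {f g : BoundedContinuousFunction X ℂ} {A B : Set X}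

lemma hatSet_mono (hAB : A ⊆ B) : hatSet F A ⊆ hatSet F B :=
  fun p hp => p.isSetFilter.superset_mem hp hAB

lemma ffilter_univ_singleton : FFilter F {A : Set X | A = univ} := by
  refine ⟨⟨⟨univ, rfl⟩, ?_, ?_, ?_⟩, ⟨univ, rfl⟩, ?_, ?_⟩
  · rintro A rfl B rfl; simp
  · rintro A rfl B hAB; exact univ_subset_iff.mp hAB
  · intro h; exact (Set.empty_ne_univ) h
  · rintro A rfl; exact univ_nonempty
  · rintro A rfl hA; exact absurd rfl hA

lemma delta_compactSpace (hF : IsClosed (F : Set (BoundedContinuousFunction X ℂ))) :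
    CompactSpace (Delta F) := by
  rw [← isCompact_univ_iff, isCompact_iff_ultrafilter_le_nhds]
  intro U hU
  set Φ : Set (Set X) := {A : Set X | hatSet F A ∈ U} with hΦ
  have hΦuniv : {A : Set X | A = univ} ⊆ Φ := by
    rintro A rfl
    rw [hΦ, mem_setOf_eq, hatSet_univ]
    exact Filter.univ_mem
  obtain ⟨m, hm, hmΦ, hum, hmax⟩ := exists_maximal_ffilter Φ hΦuniv ffilter_univ_singleton
  -- key extension property
  have key : ∀ g₀ : BoundedContinuousFunction X ℂ, g₀ ∈ F →
      (∀ s, 0 < s → hatSet F (XSet g₀ s) ∈ U) → ∀ s, 0 < s → XSet g₀ s ∈ m := by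
    intro g₀ hg₀F hg₀U
    have hne2 : ∀ A' ∈ m, ∀ s, 0 < s → (A' ∩ XSet g₀ s).Nonempty := by
      intro A' hA' s hs
      have h1 : hatSet F (A' ∩ XSet g₀ s) ∈ U := by
        rw [hatSet_inter]
        exact Filter.inter_mem (hmΦ hA') (hg₀U s hs)
      obtain ⟨r, hr⟩ := Filter.nonempty_of_mem h1
      exact r.nonempty_mem _ hr
    obtain ⟨hFF, hsubm, hXs⟩ := filter_extend hF hm hg₀F (le_refl (0:ℝ)) hne2
    have hsubΦ : {C | ∃ A' ∈ m, ∃ s, 0 < s ∧ A' ∩ XSet g₀ s ⊆ C} ⊆ Φ := by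
      rintro C ⟨A', hA', s, hs, hsub⟩
      rw [hΦ, mem_setOf_eq]
      refine Filter.mem_of_superset ?_ (hatSet_mono hsub)
      rw [hatSet_inter]
      exact Filter.inter_mem (hmΦ hA') (hg₀U s hs)
    have := hmax _ hFF hsubΦ hsubm
    intro s hs
    rw [← this]
    exact hXs s hs
  -- m is an F-ultrafilter
  have hult : FUltrafilter F m := by
    refine ⟨hm, ?_⟩
    intro ψ hψ hmψ
    by_contra hnem
    have hA : ∃ A ∈ ψ, A ∉ m := by
      by_contra h
      push_neg at h
      exact hnem (subset_antisymm h hmψ)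
    obtain ⟨A, hAψ, hAm⟩ := hA
    have hAuniv : A ≠ univ := fun h => hAm (h ▸ hm.1.univ_mem)
    obtain ⟨B, hBψ, f₁, hf₁F, hf₁0, hf₁1⟩ := hψ.2.2.2 A hAψ hAuniv
    obtain ⟨f₀, hf₀F, hf₀v, hf₀0', hf₀1'⟩ :=
      exists_sep hF hf₁F (le_refl (0:ℝ)) (by norm_num : (0:ℝ) < 1)
    have hf₀B : ∀ x ∈ B, f₀ x = 0 := fun x hx => hf₀0' x (by rw [hf₁0 x hx]; simp)
    have hf₀A : ∀ x ∉ A, f₀ x = 1 := fun x hx => hf₀1' x (by rw [hf₁1 x hx]; simp)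
    by_cases hcase : ∀ s, 0 < s → s < 1 → hatSet F (XSet f₀ s) ∈ U
    · have hall : ∀ s, 0 < s → hatSet F (XSet f₀ s) ∈ U := by
        intro s hs
        rcases lt_or_ge s 1 with h1 | h1
        · exact hcase s hs h1
        · refine Filter.mem_of_superset (hcase (1/2) (by norm_num) (by norm_num)) ?_
          exact hatSet_mono (XSet.mono (by linarith))
      have hXm := key f₀ hf₀F hall (1/2) (by norm_num)
      have hsubA : XSet f₀ (1/2) ⊆ A := by
        intro x hx
        by_contra hxA
        rw [mem_XSet, hf₀A x hxA] at hx
        norm_num at hx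
      exact hAm (hm.1.superset_mem hXm hsubA)
    · push_neg at hcase
      obtain ⟨s₀, hs₀0, hs₀1, hs₀U⟩ := hcase
      have hW : (hatSet F (XSet f₀ s₀))ᶜ ∈ U := Ultrafilter.compl_mem_iff_notMem.mpr hs₀U
      obtain ⟨g₂, hg₂F, hg₂v, hg₂0, hg₂1⟩ :=
        exists_sep hF hf₀F (by linarith : (0:ℝ) ≤ s₀/4) (by linarith : s₀/4 < s₀/2)
      set h₀ : BoundedContinuousFunction X ℂ := BoundedContinuousFunction.const X 1 - g₂
        with hh₀def
      have hh₀F : h₀ ∈ F := sub_mem (const_mem 1) hg₂F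
      have hh₀x : ∀ x, h₀ x = 1 - g₂ x := fun x => rfl
      have hh₀0 : ∀ x, s₀/2 ≤ ‖f₀ x‖ → h₀ x = 0 := by
        intro x hx
        rw [hh₀x, hg₂1 x hx]; ring
      have hh₀B : ∀ x ∈ B, h₀ x = 1 := by
        intro x hx
        rw [hh₀x, hg₂0 x (by rw [hf₀B x hx]; simp; positivity)]
        ring
      have hWsub : ∀ t, 0 < t → (hatSet F (XSet f₀ s₀))ᶜ ⊆ hatSet F (XSet h₀ t) := by
        intro t ht q hq
        have hXq : XSet f₀ s₀ ∉ q.1 := hq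
        have hC : ∃ C ∈ q.1, C ∩ XSet f₀ (s₀/2) = ∅ := by
          by_contra h
          push_neg at h
          have hne3 : ∀ C ∈ q.1, (C ∩ XSet f₀ (s₀/2)).Nonempty := h
          exact hXq (ultra_push hF q.prop hf₀F (by linarith) hne3 s₀ (by linarith))
        obtain ⟨C, hCq, hCdisj⟩ := hC
        have hCsub : C ⊆ XSet h₀ t := by
          intro x hxC
          have hfx : s₀/2 < ‖f₀ x‖ := by
            by_contra hle
            push_neg at hle
            have : x ∈ C ∩ XSet f₀ (s₀/2) := ⟨hxC, hle⟩
            rw [hCdisj] at this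
            exact this
          rw [mem_XSet, hh₀0 x (le_of_lt hfx)]
          simp [le_of_lt ht]
        exact q.isSetFilter.superset_mem hCq hCsub
      have hall : ∀ t, 0 < t → hatSet F (XSet h₀ t) ∈ U :=
        fun t ht => Filter.mem_of_superset hW (hWsub t ht)
      have hXm := key h₀ hh₀F hall (1/2) (by norm_num)
      have : (B ∩ XSet h₀ (1/2)).Nonempty :=
        hψ.2.2.1 _ (hψ.1.inter_mem hBψ (hmψ hXm))
      obtain ⟨x, hxB, hxX⟩ := this
      rw [mem_XSet, hh₀B x hxB] at hxX
      norm_num at hxX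
  -- conclude
  refine ⟨⟨m, hult⟩, mem_univ _, ?_⟩
  intro s hs
  replace hs := delta_mem_nhds.mp hs
  obtain ⟨A, hAm, hsub⟩ := hs
  exact Filter.mem_of_superset (hmΦ hAm) hsub

end Aux6

section Aux7
set_option linter.unusedVariables false

variable {F : StarSubalgebra ℂ (BoundedContinuousFunction X ℂ)}
variable {f g : BoundedContinuousFunction X ℂ} {A B : Set X}

lemma mem_nhds_of_isOpen' {Y : Type*} {t : TopologicalSpace Y} {U s : Set Y} {y : Y}
    (h : @IsOpen Y t U) (hy : y ∈ U) (hsub : U ⊆ s) : s ∈ @nhds Y t y := by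
  letI := t
  exact Filter.mem_of_superset (h.mem_nhds hy) hsub

set_option maxHeartbeats 1000000 in
/-- The Gelfand-type homomorphism from `F` to continuous functions on `Delta F`. -/
noncomputable def hatHom (hF : IsClosed (F : Set (BoundedContinuousFunction X ℂ))) :
    F →⋆ₐ[ℂ] C(Delta F, ℂ) where
  toFun f := ⟨fun p => limval p.1 f.1, continuous_limval hF f.2⟩
  map_one' := by
    ext p
    refine IsLimVal.limval_eq p.isSetFilter p.nonempty_mem ?_
    have : ((1 : F) : BoundedContinuousFunction X ℂ) = BoundedContinuousFunction.const X 1 := by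
      ext x; rfl
    rw [this]
    exact islim_const p.isSetFilter 1
  map_mul' f g := by
    ext p
    refine IsLimVal.limval_eq p.isSetFilter p.nonempty_mem ?_
    have : ((f * g : F) : BoundedContinuousFunction X ℂ) = (f : BoundedContinuousFunction X ℂ) * g := rfl
    rw [this]
    exact islim_mul p.isSetFilter (limval_spec hF p.prop f.2) (limval_spec hF p.prop g.2)
  map_zero' := by
    ext p
    refine IsLimVal.limval_eq p.isSetFilter p.nonempty_mem ?_
    have : ((0 : F) : BoundedContinuousFunction X ℂ) = BoundedContinuousFunction.const X 0 := by
      ext x; rfl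
    rw [this]
    exact islim_const p.isSetFilter 0
  map_add' f g := by
    ext p
    refine IsLimVal.limval_eq p.isSetFilter p.nonempty_mem ?_
    have : ((f + g : F) : BoundedContinuousFunction X ℂ) = (f : BoundedContinuousFunction X ℂ) + g := rfl
    rw [this]
    exact islim_add p.isSetFilter (limval_spec hF p.prop f.2) (limval_spec hF p.prop g.2)
  commutes' c := by
    ext p
    refine IsLimVal.limval_eq p.isSetFilter p.nonempty_mem ?_
    have : ((algebraMap ℂ F c : F) : BoundedContinuousFunction X ℂ)
        = BoundedContinuousFunction.const X c := by
      ext x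
      simp [BoundedContinuousFunction.algebraMap_apply, smul_eq_mul]
    rw [this]
    have hc : (algebraMap ℂ C(Delta F, ℂ) c) p = c := by simp [Algebra.algebraMap_eq_smul_one]
    rw [hc]
    exact islim_const p.isSetFilter c
  map_star' f := by
    ext p
    refine IsLimVal.limval_eq p.isSetFilter p.nonempty_mem ?_
    have : ((star f : F) : BoundedContinuousFunction X ℂ)
        = star (f : BoundedContinuousFunction X ℂ) := rfl
    rw [this]
    exact islim_star p.isSetFilter (limval_spec hF p.prop f.2)

lemma hatHom_apply (hF : IsClosed (F : Set (BoundedContinuousFunction X ℂ))) (f : F)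
    (p : Delta F) : hatHom hF f p = limval p.1 f.1 := rfl

lemma islim_eval (hf : f ∈ F) (e : X → Delta F)
    (he : ∀ x : X, (e x).1 = {A : Set X | A ∈ @nhds X (tauF F) x}) (x : X) :
    IsLimVal (e x).1 f (f x) := by
  intro ε hε
  rw [he x, mem_setOf_eq]
  have hle : tauF F ≤ TopologicalSpace.induced (fun y => f y) inferInstance := by
    refine le_trans (iInf_le _ f) ?_
    exact le_trans (iInf_le _ hf) (le_refl _)
  have hopen : @IsOpen X (tauF F) ((fun y => f y) ⁻¹' Metric.ball (f x) ε) := by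
    refine hle _ ?_
    exact @isOpen_induced_iff X ℂ _ _ _ |>.mpr ⟨Metric.ball (f x) ε, Metric.isOpen_ball, rfl⟩
  have hmem : x ∈ (fun y => f y) ⁻¹' Metric.ball (f x) ε := by
    simp [Metric.mem_ball, hε]
  refine mem_nhds_of_isOpen' hopen hmem ?_
  intro y hy
  rw [mem_preimage, Metric.mem_ball, dist_eq_norm] at hy
  exact mem_XSet_sub.mpr (le_of_lt hy)

lemma limval_eval (hf : f ∈ F) (e : X → Delta F)
    (he : ∀ x : X, (e x).1 = {A : Set X | A ∈ @nhds X (tauF F) x}) (x : X) :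
    limval (e x).1 f = f x :=
  (islim_eval hf e he x).limval_eq (e x).isSetFilter (e x).nonempty_mem

lemma hatHom_separates (hF : IsClosed (F : Set (BoundedContinuousFunction X ℂ))) :
    ((hatHom hF).range : StarSubalgebra ℂ C(Delta F, ℂ)).SeparatesPoints := by
  intro p q hpq
  obtain ⟨f₀, hf₀F, B, hB, C, hCq, hv, hB0, hBsub, hC⟩ := delta_sep hF hpq
  refine ⟨(fun h => (h : Delta F → ℂ)) (hatHom hF ⟨f₀, hf₀F⟩),
    ⟨hatHom hF ⟨f₀, hf₀F⟩, ⟨⟨f₀, hf₀F⟩, rfl⟩, rfl⟩, ?_⟩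
  have hp0 : limval p.1 f₀ = 0 := by
    refine IsLimVal.limval_eq p.isSetFilter p.nonempty_mem ?_
    intro ε hε
    refine p.isSetFilter.superset_mem hB ?_
    intro x hx
    rw [mem_XSet_sub, hB0 x hx]
    simpa using le_of_lt hε
  have hq0 : limval q.1 f₀ ≠ 0 := by
    intro hw
    have hspec := limval_spec hF q.prop hf₀F (1/8) (by norm_num)
    obtain ⟨x, hx1, hx2⟩ := q.nonempty_mem _ (q.isSetFilter.inter_mem hCq hspec)
    rw [mem_XSet_sub, hw] at hx2
    have hxX : x ∉ XSet f₀ (1/4) := fun hxX => by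
      have : x ∈ C ∩ XSet f₀ (1/4) := ⟨hx1, hxX⟩
      rw [hC] at this
      exact this
    rw [mem_XSet] at hxX
    push_neg at hxX
    simp only [sub_zero] at hx2
    linarith
  change (hatHom hF ⟨f₀, hf₀F⟩) p ≠ (hatHom hF ⟨f₀, hf₀F⟩) q
  rw [hatHom_apply, hatHom_apply, hp0]
  exact fun h => hq0 h.symm

lemma hatHom_norm (hF : IsClosed (F : Set (BoundedContinuousFunction X ℂ)))
    [CompactSpace (Delta F)] (e : X → Delta F)
    (he : ∀ x : X, (e x).1 = {A : Set X | A ∈ @nhds X (tauF F) x}) (f : F) :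
    ‖hatHom hF f‖ = ‖(f : BoundedContinuousFunction X ℂ)‖ := by
  apply le_antisymm
  · rw [ContinuousMap.norm_le _ (norm_nonneg _)]
    intro p
    rw [hatHom_apply]
    exact islim_norm_le p.nonempty_mem (limval_spec hF p.prop f.2)
  · have : ‖(f : BoundedContinuousFunction X ℂ)‖ ≤ ‖hatHom hF f‖ := by
      rw [BoundedContinuousFunction.norm_le (norm_nonneg _)]
      intro x
      have : (f : BoundedContinuousFunction X ℂ) x = hatHom hF f (e x) := by
        rw [hatHom_apply, limval_eval f.2 e he x]
      rw [this]
      exact (hatHom hF f).norm_coe_le_norm (e x)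
    exact this

/-- Stone–Weierstrass: the homomorphism is surjective. -/
lemma hatHom_surjective (hF : IsClosed (F : Set (BoundedContinuousFunction X ℂ)))
    [CompactSpace (Delta F)] (e : X → Delta F)
    (he : ∀ x : X, (e x).1 = {A : Set X | A ∈ @nhds X (tauF F) x})
    (h : C(Delta F, ℂ)) : ∃ f : F, hatHom hF f = h := by
  have hclosed : IsClosed (((hatHom hF).range : StarSubalgebra ℂ C(Delta F, ℂ)) :
      Set C(Delta F, ℂ)) := by
    haveI : CompleteSpace F := IsComplete.completeSpace_coe hF.isComplete
    have hiso : Isometry (fun f : F => hatHom hF f) := by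
      apply Isometry.of_dist_eq
      intro f g
      calc dist (hatHom hF f) (hatHom hF g) = ‖hatHom hF f - hatHom hF g‖ := dist_eq_norm _ _
        _ = ‖hatHom hF (f - g)‖ := by rw [map_sub]
        _ = ‖((f - g : F) : BoundedContinuousFunction X ℂ)‖ := hatHom_norm hF e he (f - g)
        _ = ‖(f : BoundedContinuousFunction X ℂ) - (g : BoundedContinuousFunction X ℂ)‖ := rfl
        _ = dist (f : BoundedContinuousFunction X ℂ) (g : BoundedContinuousFunction X ℂ) :=
            (dist_eq_norm _ _).symm
        _ = dist f g := (Subtype.dist_eq f g).symm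
    have hrange : (((hatHom hF).range : StarSubalgebra ℂ C(Delta F, ℂ)) :
        Set C(Delta F, ℂ)) = Set.range (fun f : F => hatHom hF f) := by
      ext h'
      constructor
      · rintro ⟨f, rfl⟩; exact ⟨f, rfl⟩
      · rintro ⟨f, rfl⟩; exact ⟨f, rfl⟩
    rw [hrange]
    exact hiso.isClosedEmbedding.isClosed_range
  have hSW := ContinuousMap.starSubalgebra_topologicalClosure_eq_top_of_separatesPoints
    ((hatHom hF).range) (hatHom_separates hF)
  have hcoe : closure (((hatHom hF).range : StarSubalgebra ℂ C(Delta F, ℂ)) :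
      Set C(Delta F, ℂ)) = univ := by
    have := congrArg (fun (S : StarSubalgebra ℂ C(Delta F, ℂ)) => (S : Set C(Delta F, ℂ))) hSW
    simpa [StarSubalgebra.topologicalClosure] using this
  have : h ∈ (((hatHom hF).range : StarSubalgebra ℂ C(Delta F, ℂ)) : Set C(Delta F, ℂ)) := by
    rw [← hclosed.closure_eq, hcoe]
    trivial
  obtain ⟨f, hf⟩ := this
  exact ⟨f, hf⟩

end Aux7

section Aux8
set_option linter.unusedVariables false

variable {F F₁ F₂ : StarSubalgebra ℂ (BoundedContinuousFunction X ℂ)}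
variable {f g : BoundedContinuousFunction X ℂ} {φ : Set (Set X)} {z : ℂ} {A B : Set X}

lemma XSet_sub_const_zero {ρ : ℝ} :
    XSet (f - BoundedContinuousFunction.const X (0:ℂ)) ρ = XSet f ρ := by
  ext x
  rw [mem_XSet_sub, mem_XSet, sub_zero]

lemma islim_smul (hφ : IsSetFilter φ) (c : ℂ) (h : IsLimVal φ f z) :
    IsLimVal φ (c • f) (c * z) := by
  have heq : c • f = BoundedContinuousFunction.const X c * f := by
    ext x
    simp [smul_eq_mul]
  rw [heq]
  exact islim_mul hφ (islim_const hφ c) h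

/-- Two `F`-ultrafilters with the same limit values coincide. -/
lemma delta_limval_eq (hF : IsClosed (F : Set (BoundedContinuousFunction X ℂ)))
    {p q : Delta F} (h : ∀ f ∈ F, limval p.1 f = limval q.1 f) : p = q := by
  by_contra hpq
  obtain ⟨f₀, hf₀F, B, hB, C, hCq, hv, hB0, hBsub, hC⟩ := delta_sep hF hpq
  have hp0 : limval p.1 f₀ = 0 := by
    refine IsLimVal.limval_eq p.isSetFilter p.nonempty_mem ?_
    intro ε hε
    refine p.isSetFilter.superset_mem hB ?_
    intro x hx
    rw [mem_XSet_sub, hB0 x hx]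
    simpa using le_of_lt hε
  have hq0 : limval q.1 f₀ ≠ 0 := by
    intro hw
    have hspec := limval_spec hF q.prop hf₀F (1/8) (by norm_num)
    obtain ⟨x, hx1, hx2⟩ := q.nonempty_mem _ (q.isSetFilter.inter_mem hCq hspec)
    rw [mem_XSet_sub, hw] at hx2
    have hxX : x ∉ XSet f₀ (1/4) := fun hxX => by
      have : x ∈ C ∩ XSet f₀ (1/4) := ⟨hx1, hxX⟩
      rw [hC] at this
      exact this
    rw [mem_XSet] at hxX
    push_neg at hxX
    simp only [sub_zero] at hx2
    linarith
  exact hq0 (((h f₀ hf₀F).symm.trans hp0))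

/-- The "trace" collection of a filter `r`, relative to `F₁`, is a `T`-filter for every closed
`T ⊇ F₁`, and its generators belong to `r`. -/
lemma traceFFilter (hF₁ : IsClosed (F₁ : Set (BoundedContinuousFunction X ℂ)))
    {E : StarSubalgebra ℂ (BoundedContinuousFunction X ℂ)}
    (hE : IsClosed (E : Set (BoundedContinuousFunction X ℂ)))
    (hsub : (F₁ : Set (BoundedContinuousFunction X ℂ)) ⊆ E)
    {r : Set (Set X)} (hr : FUltrafilter E r)
    {T : StarSubalgebra ℂ (BoundedContinuousFunction X ℂ)}
    (hT : IsClosed (T : Set (BoundedContinuousFunction X ℂ)))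
    (hsubT : (F₁ : Set (BoundedContinuousFunction X ℂ)) ⊆ T) :
    FFilter T {A | ∃ f ∈ F₁, ∃ ε : ℝ, 0 < ε ∧
        XSet (f - BoundedContinuousFunction.const X (limval r f)) ε ⊆ A} ∧
      (∀ f ∈ F₁, ∀ ε : ℝ, 0 < ε →
        XSet (f - BoundedContinuousFunction.const X (limval r f)) ε ∈ r) := by
  have hrf : IsSetFilter r := hr.1.1
  have hrne : ∀ A ∈ r, A.Nonempty := hr.1.2.2.1
  have hgen : ∀ f ∈ F₁, ∀ ε : ℝ, 0 < ε →
      XSet (f - BoundedContinuousFunction.const X (limval r f)) ε ∈ r := by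
    intro f hf ε hε
    exact limval_spec hE hr (hsub hf) ε hε
  set Tr : Set (Set X) := {A | ∃ f ∈ F₁, ∃ ε : ℝ, 0 < ε ∧
      XSet (f - BoundedContinuousFunction.const X (limval r f)) ε ⊆ A} with hTr
  have huniv : univ ∈ Tr :=
    ⟨0, zero_mem F₁, 1, one_pos, subset_univ _⟩
  have hne : ∀ A ∈ Tr, A.Nonempty := by
    rintro A ⟨f, hf, ε, hε, hsubA⟩
    exact (hrne _ (hgen f hf ε hε)).mono hsubA
  refine ⟨⟨⟨⟨univ, huniv⟩, ?_, ?_, ?_⟩, ⟨univ, huniv⟩, hne, ?_⟩, hgen⟩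
  · -- intersections
    rintro A ⟨f, hf, ε, hε, hsubA⟩ B ⟨g, hg, δ, hδ, hsubB⟩
    set a := limval r f with ha
    set b := limval r g with hb
    set u : BoundedContinuousFunction X ℂ := f - BoundedContinuousFunction.const X a with hu
    set v : BoundedContinuousFunction X ℂ := g - BoundedContinuousFunction.const X b with hv
    have huF₁ : u ∈ F₁ := sub_mem hf (const_mem a)
    have hvF₁ : v ∈ F₁ := sub_mem hg (const_mem b)
    set c₁ : ℂ := (((ε^2)⁻¹ : ℝ) : ℂ) with hc₁
    set c₂ : ℂ := (((δ^2)⁻¹ : ℝ) : ℂ) with hc₂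
    set h : BoundedContinuousFunction X ℂ := c₁ • (star u * u) + c₂ • (star v * v) with hh
    have hhF₁ : h ∈ F₁ :=
      add_mem (SMulMemClass.smul_mem c₁ (mul_mem (star_mem huF₁) huF₁))
        (SMulMemClass.smul_mem c₂ (mul_mem (star_mem hvF₁) hvF₁))
    have hulim : IsLimVal r u 0 := by
      have := islim_sub hrf (limval_spec hE hr (hsub hf)) (islim_const hrf a)
      rw [sub_self] at this
      exact this
    have hvlim : IsLimVal r v 0 := by
      have := islim_sub hrf (limval_spec hE hr (hsub hg)) (islim_const hrf b)
      rw [sub_self] at this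
      exact this
    have hhlim : IsLimVal r h 0 := by
      have h1 : IsLimVal r (c₁ • (star u * u)) 0 := by
        have := islim_smul hrf c₁ (islim_mul hrf (islim_star hrf hulim) hulim)
        simpa using this
      have h2 : IsLimVal r (c₂ • (star v * v)) 0 := by
        have := islim_smul hrf c₂ (islim_mul hrf (islim_star hrf hvlim) hvlim)
        simpa using this
      have := islim_add hrf h1 h2
      simpa using this
    have hhval : limval r h = 0 := hhlim.limval_eq hrf hrne
    refine ⟨h, hhF₁, 1, one_pos, ?_⟩
    rw [hhval, XSet_sub_const_zero]
    intro x hx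
    rw [mem_XSet] at hx
    have hhx : h x = ((((ε^2)⁻¹ * ‖u x‖^2 + (δ^2)⁻¹ * ‖v x‖^2 : ℝ)) : ℂ) := by
      have e1 : h x = c₁ * ((star u * u) x) + c₂ * ((star v * v) x) := rfl
      have e2 : (star u * u) x = ((‖u x‖^2 : ℝ) : ℂ) := by
        have : (star u * u) x = star (u x) * u x := rfl
        rw [this]
        simp [RCLike.conj_mul]
      have e3 : (star v * v) x = ((‖v x‖^2 : ℝ) : ℂ) := by
        have : (star v * v) x = star (v x) * v x := rfl
        rw [this]
        simp [RCLike.conj_mul]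
      rw [e1, e2, e3, hc₁, hc₂]
      push_cast
      ring
    rw [hhx, Complex.norm_real, Real.norm_eq_abs] at hx
    have hterms : (0:ℝ) ≤ (ε^2)⁻¹ * ‖u x‖^2 ∧ (0:ℝ) ≤ (δ^2)⁻¹ * ‖v x‖^2 := by
      constructor <;> positivity
    rw [abs_of_nonneg (by linarith [hterms.1, hterms.2])] at hx
    have hu1 : ‖u x‖ ≤ ε := by
      have h1 : (ε^2)⁻¹ * ‖u x‖^2 ≤ 1 := by linarith [hterms.2]
      have h2 : ‖u x‖^2 ≤ ε^2 := by
        rw [inv_mul_le_iff₀ (by positivity)] at h1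
        linarith
      nlinarith [norm_nonneg (u x), hε]
    have hv1 : ‖v x‖ ≤ δ := by
      have h1 : (δ^2)⁻¹ * ‖v x‖^2 ≤ 1 := by linarith [hterms.1]
      have h2 : ‖v x‖^2 ≤ δ^2 := by
        rw [inv_mul_le_iff₀ (by positivity)] at h1
        linarith
      nlinarith [norm_nonneg (v x), hδ]
    exact ⟨hsubA hu1, hsubB hv1⟩
  · -- supersets
    rintro A ⟨f, hf, ε, hε, hsubA⟩ B hAB
    exact ⟨f, hf, ε, hε, hsubA.trans hAB⟩
  · -- no empty set
    rintro hmem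
    obtain ⟨x, hx⟩ := hne _ hmem
    exact hx
  · -- F-family separation
    rintro A ⟨f, hf, ε, hε, hsubA⟩ hAuniv
    set a := limval r f with ha
    set u : BoundedContinuousFunction X ℂ := f - BoundedContinuousFunction.const X a with hu
    have huF₁ : u ∈ F₁ := sub_mem hf (const_mem a)
    obtain ⟨g₂, hg₂T, hg₂v, hg₂0, hg₂1⟩ :=
      exists_sep hT (hsubT huF₁) (by linarith : (0:ℝ) ≤ ε/2) (by linarith : ε/2 < ε)
    refine ⟨XSet u (ε/2), ⟨f, hf, ε/2, by linarith, Subset.rfl⟩, g₂, hg₂T, ?_, ?_⟩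
    · intro x hx
      exact hg₂0 x hx
    · intro x hx
      refine hg₂1 x ?_
      by_contra hlt
      push_neg at hlt
      exact hx (hsubA (mem_XSet.mpr (le_of_lt hlt)))

end Aux8


theorem stmt16 (F₁ F₂ : StarSubalgebra ℂ (BoundedContinuousFunction X ℂ))
    (hF₁ : IsClosed (F₁ : Set (BoundedContinuousFunction X ℂ))) (hF₂ : IsClosed (F₂ : Set (BoundedContinuousFunction X ℂ)))
    (e₁ : X → Delta F₁) (he₁ : ∀ x : X, (e₁ x).1 = {A : Set X | A ∈ @nhds X (tauF F₁) x})
    (e₂ : X → Delta F₂) (he₂ : ∀ x : X, (e₂ x).1 = {A : Set X | A ∈ @nhds X (tauF F₂) x}) :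
    (F₁ : Set (BoundedContinuousFunction X ℂ)) ⊆ (F₂ : Set (BoundedContinuousFunction X ℂ)) ↔
      ∃ G : Delta F₂ → Delta F₁, Continuous G ∧ Function.Surjective G ∧ e₁ = G ∘ e₂ := by
  constructor
  · intro hsub
    set Tr : Delta F₂ → Set (Set X) := fun p => {A | ∃ f ∈ F₁, ∃ ε : ℝ, 0 < ε ∧
        XSet (f - BoundedContinuousFunction.const X (limval p.1 f)) ε ⊆ A} with hTrdef
    have hTrF : ∀ p : Delta F₂, FFilter F₁ (Tr p) :=
      fun p => (traceFFilter hF₁ hF₂ hsub p.prop hF₁ (subset_refl _)).1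
    have hGex : ∀ p : Delta F₂, ∃ q : Delta F₁, Tr p ⊆ q.1 := by
      intro p
      obtain ⟨q₀, hq₀, hsubq⟩ := exists_ultrafilter_ge (hTrF p)
      exact ⟨⟨q₀, hq₀⟩, hsubq⟩
    choose G hG using hGex
    have hlimG : ∀ (p : Delta F₂) (q : Delta F₁), Tr p ⊆ q.1 →
        ∀ f ∈ F₁, limval q.1 f = limval p.1 f := by
      intro p q hq f hf
      refine IsLimVal.limval_eq q.isSetFilter q.nonempty_mem ?_
      intro ε hε
      exact hq ⟨f, hf, ε, hε, Subset.rfl⟩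
    have hGuniq : ∀ (p : Delta F₂) (q : Delta F₁), Tr p ⊆ q.1 → q = G p := by
      intro p q hq
      apply delta_limval_eq hF₁
      intro f hf
      rw [hlimG p q hq f hf, hlimG p (G p) (hG p) f hf]
    refine ⟨G, ?_, ?_, ?_⟩
    · -- continuity
      apply continuous_generateFrom_iff.mpr
      rintro S ⟨A, rfl⟩
      rw [delta_basis.isOpen_iff]
      intro p hp
      by_cases hAuniv : A = univ
      · refine ⟨hatSet F₂ univ, ⟨univ, rfl⟩, ?_, ?_⟩
        · rw [hatSet_univ]; trivial
        · intro p' _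
          rw [mem_preimage, hAuniv, mem_hatSet]
          exact (G p').isSetFilter.univ_mem
      · have hpA : A ∈ (G p).1 := hp
        obtain ⟨B', hB', f₁, hf₁F, hf₁0, hf₁1⟩ := (G p).prop.1.2.2.2 A hpA hAuniv
        obtain ⟨f₀, hf₀F, hf₀v, hf₀0', hf₀1'⟩ :=
          exists_sep hF₁ hf₁F (le_refl (0:ℝ)) (by norm_num : (0:ℝ) < 1)
        have hf₀B : ∀ x ∈ B', f₀ x = 0 := fun x hx => hf₀0' x (by rw [hf₁0 x hx]; simp)
        have hf₀A : ∀ x ∉ A, f₀ x = 1 := fun x hx => hf₀1' x (by rw [hf₁1 x hx]; simp)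
        have hz0 : limval p.1 f₀ = 0 := by
          have h1 : limval (G p).1 f₀ = limval p.1 f₀ := hlimG p (G p) (hG p) f₀ hf₀F
          have h2 : limval (G p).1 f₀ = 0 := by
            refine IsLimVal.limval_eq (G p).isSetFilter (G p).nonempty_mem ?_
            intro ε hε
            refine (G p).isSetFilter.superset_mem hB' ?_
            intro x hx
            rw [mem_XSet_sub, hf₀B x hx]
            simpa using le_of_lt hε
          rw [← h1, h2]
        have hXp : XSet f₀ (1/4) ∈ p.1 := by
          have := limval_spec hF₂ p.prop (hsub hf₀F) (1/4) (by norm_num)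
          rw [hz0, XSet_sub_const_zero] at this
          exact this
        refine ⟨hatSet F₂ (XSet f₀ (1/4)), ⟨_, rfl⟩, hXp, ?_⟩
        intro p' hp'
        rw [mem_preimage, mem_hatSet]
        set w := limval p'.1 f₀ with hwdef
        have hspec := limval_spec hF₂ p'.prop (hsub hf₀F) (1/4) (by norm_num)
        obtain ⟨x, hx1, hx2⟩ := p'.nonempty_mem _ (p'.isSetFilter.inter_mem hp' hspec)
        rw [mem_XSet] at hx1
        rw [mem_XSet_sub] at hx2
        have hw : ‖w‖ ≤ 1/2 := by
          calc ‖w‖ = ‖f₀ x - (f₀ x - w)‖ := by ring_nf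
            _ ≤ ‖f₀ x‖ + ‖f₀ x - w‖ := norm_sub_le _ _
            _ ≤ 1/4 + 1/4 := add_le_add hx1 hx2
            _ = 1/2 := by norm_num
        have hgen : XSet (f₀ - BoundedContinuousFunction.const X w) (1/4) ∈ (G p').1 :=
          hG p' ⟨f₀, hf₀F, 1/4, by norm_num, Subset.rfl⟩
        refine (G p').isSetFilter.superset_mem hgen ?_
        intro y hy
        rw [mem_XSet_sub] at hy
        by_contra hyA
        have h1 : ‖f₀ y‖ = 1 := by rw [hf₀A y hyA]; simp
        have h2 : (1:ℝ) ≤ ‖f₀ y - w‖ + ‖w‖ := by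
          calc (1:ℝ) = ‖f₀ y‖ := h1.symm
            _ = ‖(f₀ y - w) + w‖ := by ring_nf
            _ ≤ ‖f₀ y - w‖ + ‖w‖ := norm_add_le _ _
        linarith
    · -- surjectivity
      intro q
      obtain ⟨hφ'F, hφ'gen⟩ := traceFFilter hF₁ hF₁ (subset_refl _) q.prop hF₂ hsub
      obtain ⟨p₀, hp₀, hsubp₀⟩ := exists_ultrafilter_ge hφ'F
      set p : Delta F₂ := ⟨p₀, hp₀⟩ with hpdef
      refine ⟨p, ?_⟩
      refine (hGuniq p q ?_).symm
      rintro A ⟨f, hf, ε, hε, hsubA⟩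
      have hlim : limval p.1 f = limval q.1 f := by
        refine IsLimVal.limval_eq p.isSetFilter p.nonempty_mem ?_
        intro δ hδ
        exact hsubp₀ ⟨f, hf, δ, hδ, Subset.rfl⟩
      refine q.isSetFilter.superset_mem ?_ hsubA
      rw [hlim]
      exact hφ'gen f hf ε hε
    · -- e₁ = G ∘ e₂
      funext x
      refine hGuniq (e₂ x) (e₁ x) ?_
      rintro A ⟨f, hf, ε, hε, hsubA⟩
      have hfx : limval (e₂ x).1 f = f x := limval_eval (hsub hf) e₂ he₂ x
      refine (e₁ x).isSetFilter.superset_mem ?_ hsubA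
      rw [hfx]
      exact islim_eval hf e₁ he₁ x ε hε
  · rintro ⟨G, hGc, hGs, hcomp⟩
    haveI := delta_compactSpace hF₂
    intro f hf
    set h : C(Delta F₂, ℂ) := ⟨fun p => limval (G p).1 f, (continuous_limval hF₁ hf).comp hGc⟩
      with hhdef
    obtain ⟨g, hg⟩ := hatHom_surjective hF₂ e₂ he₂ h
    have hgf : ∀ x, (g : BoundedContinuousFunction X ℂ) x = f x := by
      intro x
      have h1 : hatHom hF₂ g (e₂ x) = (g : BoundedContinuousFunction X ℂ) x := by
        rw [hatHom_apply]
        exact limval_eval g.2 e₂ he₂ x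
      have h2 : h (e₂ x) = limval (G (e₂ x)).1 f := rfl
      have h3 : G (e₂ x) = e₁ x := (congrFun hcomp x).symm
      have h4 : limval (e₁ x).1 f = f x := limval_eval hf e₁ he₁ x
      rw [← h1, hg, h2, h3, h4]
    have hgfe : (g : BoundedContinuousFunction X ℂ) = f := BoundedContinuousFunction.ext hgf
    rw [← hgfe]
    exact g.2
end

section
/- Let F₁ and F₂ be C*-subalgebras of ℓ∞(X) containing the constant functions with F₁ ⊆ F₂, and let G : δ₂X → δ₁X be a continuous surjection with e₁ = G ∘ e₂. For p ∈ δ₂X and q ∈ δ₁X, the following statements are equivalent: (i) q ⊆ p; (ii) G(p) = q; (iii) f^{δ₂}(p) = f^{δ₁}(q) for every f ∈ F₁, where f^{δ₁} and f^{δ₂} denote the unique continuous extensions of f to δ₁X and δ₂X (i.e. the unique continuous functions with f = f^{δ₁} ∘ e₁ and f = f^{δ₂} ∘ e₂). -/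
open Set

variable {X : Type*} [Nonempty X] [TopologicalSpace X] [DiscreteTopology X]

set_option linter.unusedSectionVars false

section Aux

namespace DeltaAux

variable {F : StarSubalgebra ℂ (BoundedContinuousFunction X ℂ)}

theorem mem_of_superset' {p : Set (Set X)} (hp : FFilter F p) {A B : Set X}
    (hA : A ∈ p) (hAB : A ⊆ B) : B ∈ p := hp.1.2.2.1 A hA B hAB

theorem inter_mem' {p : Set (Set X)} (hp : FFilter F p) {A B : Set X}
    (hA : A ∈ p) (hB : B ∈ p) : A ∩ B ∈ p := hp.1.2.1 A hA B hB

theorem univ_mem' {p : Set (Set X)} (hp : FFilter F p) : Set.univ ∈ p := by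
  obtain ⟨A, hA⟩ := hp.1.1
  exact mem_of_superset' hp hA (Set.subset_univ A)

theorem nonempty_of_mem' {p : Set (Set X)} (hp : FFilter F p) {A : Set X}
    (hA : A ∈ p) : A.Nonempty := hp.2.2.1 A hA

theorem hat_inter (A B : Set X) : hatSet F (A ∩ B) = hatSet F A ∩ hatSet F B := by
  ext p
  constructor
  · intro h
    exact ⟨mem_of_superset' p.2.1 h Set.inter_subset_left,
      mem_of_superset' p.2.1 h Set.inter_subset_right⟩
  · rintro ⟨h1, h2⟩
    exact inter_mem' p.2.1 h1 h2

theorem isBasis :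
    TopologicalSpace.IsTopologicalBasis {S : Set (Delta F) | ∃ A : Set X, S = hatSet F A} := by
  refine ⟨?_, ?_, rfl⟩
  · rintro t₁ ⟨A, rfl⟩ t₂ ⟨B, rfl⟩ p hp
    exact ⟨hatSet F (A ∩ B), ⟨A ∩ B, rfl⟩, (hat_inter A B) ▸ hp, (hat_inter A B).le⟩
  · apply Set.eq_univ_of_univ_subset
    intro p _
    exact ⟨hatSet F Set.univ, ⟨Set.univ, rfl⟩, univ_mem' p.2.1⟩

theorem family_witness {p : Set (Set X)} (hp : FFilter F p) {A : Set X} (hA : A ∈ p) :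
    ∃ B ∈ p, ∃ h ∈ F, (∀ x ∈ B, h x = 0) ∧ ∀ x ∉ A, h x = 1 := by
  by_cases hu : A = Set.univ
  · exact ⟨A, hA, 0, zero_mem F, fun x _ => rfl,
      fun x hx => absurd (hu ▸ Set.mem_univ x) hx⟩
  · exact hp.2.2.2 A hA hu

theorem continuous_tauF {f : BoundedContinuousFunction X ℂ} (hf : f ∈ F) :
    @Continuous X ℂ (tauF F) _ fun x => f x := by
  rw [@continuous_iff_le_induced _ _ _ (tauF F) _]
  exact iInf₂_le f hf

theorem exists_nhds_of_mem {p : Set (Set X)} (hp : FFilter F p) {A : Set X} (hA : A ∈ p) :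
    ∃ x : X, A ∈ @nhds X (tauF F) x := by
  obtain ⟨B, hB, h, hhF, hh0, hh1⟩ := family_witness hp hA
  obtain ⟨x, hx⟩ := nonempty_of_mem' hp hB
  refine ⟨x, ?_⟩
  have hopen : @IsOpen X (tauF F) ((fun y => h y) ⁻¹' Metric.ball 0 1) :=
    @Continuous.isOpen_preimage X ℂ (tauF F) _ _ (continuous_tauF hhF) _ Metric.isOpen_ball
  have hmem : x ∈ (fun y => h y) ⁻¹' Metric.ball 0 1 := by
    simp [Set.mem_preimage, hh0 x hx]
  have hnb : ((fun y => h y) ⁻¹' Metric.ball 0 1) ∈ @nhds X (tauF F) x :=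
    @IsOpen.mem_nhds X (tauF F) _ _ hopen hmem
  refine Filter.mem_of_superset hnb ?_
  intro y hy
  simp only [Set.mem_preimage, Metric.mem_ball] at hy
  by_contra hyA
  rw [hh1 y hyA] at hy
  simp at hy

theorem dense_range_e (e : X → Delta F)
    (he : ∀ x, (e x).1 = {A : Set X | A ∈ @nhds X (tauF F) x}) :
    Dense (Set.range e) := by
  rw [isBasis.dense_iff]
  rintro o ⟨A, rfl⟩ ⟨p, hp⟩
  obtain ⟨x, hx⟩ := exists_nhds_of_mem p.2.1 hp
  exact ⟨e x, by simpa [hatSet, he x] using hx, Set.mem_range_self x⟩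

/-- Evaluation at a point as an algebra homomorphism. -/
noncomputable def evalHom (x : X) : BoundedContinuousFunction X ℂ →ₐ[ℂ] ℂ where
  toFun g := g x
  map_one' := rfl
  map_mul' _ _ := rfl
  map_zero' := rfl
  map_add' _ _ := rfl
  commutes' _ := rfl

theorem bump (hF : IsClosed (F : Set (BoundedContinuousFunction X ℂ)))
    {f : BoundedContinuousFunction X ℂ} (hf : f ∈ F) (z : ℂ) {a b : ℝ}
    (ha : 0 < a) (hab : a < b) :
    ∃ h ∈ F, (∀ x, ‖f x - z‖ ≤ a → h x = 0) ∧ (∀ x, b ≤ ‖f x - z‖ → h x = 1) := by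
  have hden : (0:ℝ) < b ^ 2 - a ^ 2 := by nlinarith
  set ψ : ℝ → ℝ := fun s => min 1 (max 0 ((s - a ^ 2) / (b ^ 2 - a ^ 2))) with hψ
  have hψc : Continuous ψ :=
    continuous_const.min (continuous_const.max ((continuous_id.sub continuous_const).div_const _))
  have hψ01 : ∀ s, |ψ s| ≤ 1 := by
    intro s
    rw [abs_le]
    exact ⟨le_trans (by norm_num) (le_min zero_le_one (le_max_left _ _)), min_le_left _ _⟩
  set t : X → ℝ := fun x => ‖f x - z‖ ^ 2 with ht
  set h : BoundedContinuousFunction X ℂ :=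
    ⟨⟨fun x => ((ψ (t x) : ℝ) : ℂ), continuous_of_discreteTopology⟩, 2, by
      intro x y
      have h1 := hψ01 (t x)
      have h2 := hψ01 (t y)
      calc dist ((ψ (t x) : ℝ) : ℂ) ((ψ (t y) : ℝ) : ℂ)
          ≤ ‖((ψ (t x) : ℝ) : ℂ)‖ + ‖((ψ (t y) : ℝ) : ℂ)‖ := by
            rw [dist_eq_norm]; exact norm_sub_le _ _
        _ ≤ 2 := by
            rw [Complex.norm_real, Complex.norm_real, Real.norm_eq_abs, Real.norm_eq_abs]
            linarith⟩ with hh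
  have hval : ∀ x : X, h x = ((ψ (t x) : ℝ) : ℂ) := fun _ => rfl
  set c : BoundedContinuousFunction X ℂ := algebraMap ℂ _ z with hc
  have hcF : c ∈ F := F.algebraMap_mem z
  set u : BoundedContinuousFunction X ℂ := star (f - c) * (f - c) with hu
  have huF : u ∈ F := mul_mem (star_mem (sub_mem hf hcF)) (sub_mem hf hcF)
  have hfc : ∀ x, (f - c) x = f x - z := fun x => rfl
  have huval : ∀ x : X, u x = ((t x : ℝ) : ℂ) := by
    intro x
    calc u x = star ((f - c) x) * ((f - c) x) := rfl
      _ = (f x - z) * (starRingEnd ℂ) (f x - z) := by rw [hfc, mul_comm]; rfl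
      _ = ((Complex.normSq (f x - z) : ℝ) : ℂ) := Complex.mul_conj _
      _ = ((t x : ℝ) : ℂ) := by
          rw [Complex.ofReal_inj, ← Complex.sq_norm]
  set M : ℝ := (‖f‖ + ‖z‖) ^ 2 with hM
  have htM : ∀ x, t x ∈ Set.Icc (0:ℝ) M := by
    intro x
    refine ⟨sq_nonneg _, ?_⟩
    have h1 : ‖f x - z‖ ≤ ‖f x‖ + ‖z‖ := norm_sub_le _ _
    have h2 : ‖f x‖ ≤ ‖f‖ := BoundedContinuousFunction.norm_coe_le_norm f x
    have h3 : (0:ℝ) ≤ ‖f x - z‖ := norm_nonneg _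
    show ‖f x - z‖ ^ 2 ≤ (‖f‖ + ‖z‖) ^ 2
    nlinarith
  -- h is in the closure of F
  have hclos : h ∈ closure (F : Set (BoundedContinuousFunction X ℂ)) := by
    rw [Metric.mem_closure_iff]
    intro ε hε
    obtain ⟨P, hP⟩ := exists_polynomial_near_of_continuousOn 0 M ψ hψc.continuousOn
      (ε / 2) (half_pos hε)
    set Q : Polynomial ℂ := P.map (algebraMap ℝ ℂ) with hQ
    set g : BoundedContinuousFunction X ℂ := Polynomial.aeval u Q with hg
    have hgF : g ∈ F := by
      have h1 : g ∈ Algebra.adjoin ℂ {u} := Polynomial.aeval_mem_adjoin_singleton ℂ u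
      have h2 : Algebra.adjoin ℂ {u} ≤ F.toSubalgebra :=
        Algebra.adjoin_le (Set.singleton_subset_iff.mpr huF)
      exact h2 h1
    refine ⟨g, hgF, ?_⟩
    have hgx : ∀ x : X, g x = ((P.eval (t x) : ℝ) : ℂ) := by
      intro x
      have h1 : g x = evalHom x (Polynomial.aeval u Q) := rfl
      rw [h1, ← Polynomial.aeval_algHom_apply]
      have h2 : evalHom x u = u x := rfl
      rw [h2, huval x]
      have h3 : ((t x : ℝ) : ℂ) = algebraMap ℝ ℂ (t x) := rfl
      rw [h3, hQ]
      rw [Polynomial.aeval_def, Polynomial.eval₂_map]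
      have h4 : (algebraMap ℂ ℂ).comp (algebraMap ℝ ℂ) = algebraMap ℝ ℂ := by
        ext r; simp
      rw [h4, Polynomial.eval₂_at_apply]
      rfl
    have : dist h g ≤ ε / 2 := by
      rw [BoundedContinuousFunction.dist_le (half_pos hε).le]
      intro x
      rw [hgx x, hval x, Complex.dist_eq]
      have : ((ψ (t x) : ℝ) : ℂ) - ((P.eval (t x) : ℝ) : ℂ) = ((ψ (t x) - P.eval (t x) : ℝ) : ℂ) := by
        push_cast; ring
      rw [this]
      have := hP (t x) (htM x)
      rw [Complex.norm_real, Real.norm_eq_abs]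
      rw [abs_sub_comm]
      linarith
    linarith [lt_of_le_of_lt this (half_lt_self hε)]
  have hhF : h ∈ F := by
    have : h ∈ (F : Set (BoundedContinuousFunction X ℂ)) := by
      rw [← hF.closure_eq]; exact hclos
    exact this
  refine ⟨h, hhF, ?_, ?_⟩
  · intro x hx
    rw [hval x]
    have h1 : t x ≤ a ^ 2 := pow_le_pow_left₀ (norm_nonneg _) hx 2
    have h2 : ψ (t x) = 0 := by
      have hle : (t x - a ^ 2) / (b ^ 2 - a ^ 2) ≤ 0 :=
        div_nonpos_iff.mpr (Or.inr ⟨by linarith, hden.le⟩)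
      show min 1 (max 0 ((t x - a ^ 2) / (b ^ 2 - a ^ 2))) = 0
      rw [max_eq_left hle, min_eq_right zero_le_one]
    rw [h2]; norm_num
  · intro x hx
    rw [hval x]
    have h1 : b ^ 2 ≤ t x := pow_le_pow_left₀ (ha.trans hab).le hx 2
    have h2 : ψ (t x) = 1 := by
      have h3 : (1:ℝ) ≤ (t x - a ^ 2) / (b ^ 2 - a ^ 2) := by
        rw [le_div_iff₀ hden]; linarith
      show min 1 (max 0 ((t x - a ^ 2) / (b ^ 2 - a ^ 2))) = 1
      rw [max_eq_right (le_trans zero_le_one h3), min_eq_left h3]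
    rw [h2]; norm_num
theorem mem_of_cluster (hF : IsClosed (F : Set (BoundedContinuousFunction X ℂ)))
    {p : Set (Set X)} (hp : FUltrafilter F p)
    {f : BoundedContinuousFunction X ℂ} (hf : f ∈ F) {z : ℂ}
    (hz : ∀ A ∈ p, ∀ ε : ℝ, 0 < ε → ∃ x ∈ A, ‖f x - z‖ ≤ ε)
    {ε : ℝ} (hε : 0 < ε) : {x : X | ‖f x - z‖ ≤ ε} ∈ p := by
  set φ : Set (Set X) :=
    {C | ∃ A ∈ p, ∃ δ : ℝ, 0 < δ ∧ A ∩ {x | ‖f x - z‖ ≤ δ} ⊆ C} with hφdef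
  have hpφ : p ⊆ φ := fun A hA => ⟨A, hA, 1, one_pos, Set.inter_subset_left⟩
  have hφne : ∀ C ∈ φ, C.Nonempty := by
    rintro C ⟨A, hA, δ, hδ, hsub⟩
    obtain ⟨x, hxA, hxd⟩ := hz A hA δ hδ
    exact ⟨x, hsub ⟨hxA, hxd⟩⟩
  have huniv : Set.univ ∈ φ := hpφ (univ_mem' hp.1)
  have hφ : FFilter F φ := by
    refine ⟨⟨⟨Set.univ, huniv⟩, ?_, ?_, ?_⟩, ⟨Set.univ, huniv⟩, hφne, ?_⟩
    · rintro C₁ ⟨A₁, hA₁, δ₁, hδ₁, h₁⟩ C₂ ⟨A₂, hA₂, δ₂, hδ₂, h₂⟩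
      refine ⟨A₁ ∩ A₂, inter_mem' hp.1 hA₁ hA₂, min δ₁ δ₂, lt_min hδ₁ hδ₂, ?_⟩
      rintro x ⟨⟨hx1, hx2⟩, hx3⟩
      have hx3' : ‖f x - z‖ ≤ min δ₁ δ₂ := hx3
      refine ⟨h₁ ⟨hx1, ?_⟩, h₂ ⟨hx2, ?_⟩⟩
      · exact le_trans hx3' (min_le_left _ _)
      · exact le_trans hx3' (min_le_right _ _)
    · rintro C ⟨A, hA, δ, hδ, hsub⟩ B hCB
      exact ⟨A, hA, δ, hδ, hsub.trans hCB⟩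
    · intro hempty
      exact Set.not_nonempty_empty (hφne _ hempty)
    · rintro C hC hCne
      obtain ⟨A, hA, δ, hδ, hsub⟩ := hC
      obtain ⟨B₁, hB₁, h₁, h₁F, h₁0, h₁1⟩ := family_witness hp.1 hA
      obtain ⟨h₂, h₂F, h₂0, h₂1⟩ := bump hF hf z (half_pos hδ) (half_lt_self hδ)
      refine ⟨B₁ ∩ {x | ‖f x - z‖ ≤ δ / 2}, ⟨B₁, hB₁, δ / 2, half_pos hδ, subset_rfl⟩,
        h₁ + h₂ - h₁ * h₂, ?_, ?_, ?_⟩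
      · exact sub_mem (add_mem h₁F h₂F) (mul_mem h₁F h₂F)
      · rintro x ⟨hx1, hx2⟩
        have e1 : h₁ x = 0 := h₁0 x hx1
        have e2 : h₂ x = 0 := h₂0 x hx2
        have : (h₁ + h₂ - h₁ * h₂) x = h₁ x + h₂ x - h₁ x * h₂ x := rfl
        rw [this, e1, e2]; ring
      · intro x hxC
        have hxn : x ∉ A ∩ {x | ‖f x - z‖ ≤ δ} := fun hx => hxC (hsub hx)
        have : (h₁ + h₂ - h₁ * h₂) x = h₁ x + h₂ x - h₁ x * h₂ x := rfl
        rw [this]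
        by_cases hxA : x ∈ A
        · have hxd : ¬ ‖f x - z‖ ≤ δ := fun hd => hxn ⟨hxA, hd⟩
          have e2 : h₂ x = 1 := h₂1 x (le_of_not_ge hxd)
          rw [e2]; ring
        · have e1 : h₁ x = 1 := h₁1 x hxA
          rw [e1]; ring
  have hφp : φ = p := hp.2 φ hφ hpφ
  have : {x : X | ‖f x - z‖ ≤ ε} ∈ φ :=
    ⟨Set.univ, univ_mem' hp.1, ε, hε, fun x hx => hx.2⟩
  rwa [hφp] at this

theorem exists_cluster {p : Set (Set X)} (hp : FUltrafilter F p)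
    (f : BoundedContinuousFunction X ℂ) :
    ∃ z : ℂ, ∀ A ∈ p, ∀ ε : ℝ, 0 < ε → ∃ x ∈ A, ‖f x - z‖ ≤ ε := by
  haveI : Nonempty {A : Set X // A ∈ p} := ⟨⟨Set.univ, univ_mem' hp.1⟩⟩
  have hne : (⋂ A : {A : Set X // A ∈ p}, closure (f '' A.1)).Nonempty := by
    apply IsCompact.nonempty_iInter_of_directed_nonempty_isCompact_isClosed
    · rintro ⟨A, hA⟩ ⟨B, hB⟩
      exact ⟨⟨A ∩ B, inter_mem' hp.1 hA hB⟩,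
        closure_mono (Set.image_mono Set.inter_subset_left),
        closure_mono (Set.image_mono Set.inter_subset_right)⟩
    · rintro ⟨A, hA⟩
      exact ((nonempty_of_mem' hp.1 hA).image f).closure
    · rintro ⟨A, hA⟩
      refine IsCompact.of_isClosed_subset (isCompact_closedBall (0:ℂ) ‖f‖)
        isClosed_closure ?_
      refine closure_minimal ?_ Metric.isClosed_closedBall
      rintro _ ⟨x, _, rfl⟩
      rw [Metric.mem_closedBall, Complex.dist_eq, sub_zero]
      exact BoundedContinuousFunction.norm_coe_le_norm f x
    · rintro ⟨A, hA⟩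
      exact isClosed_closure
  obtain ⟨z, hz⟩ := hne
  refine ⟨z, fun A hA ε hε => ?_⟩
  have : z ∈ closure (f '' A) := Set.mem_iInter.mp hz ⟨A, hA⟩
  obtain ⟨y, hy, hdy⟩ := Metric.mem_closure_iff.mp this ε hε
  obtain ⟨x, hxA, rfl⟩ := hy
  exact ⟨x, hxA, by rw [norm_sub_rev]; exact (Complex.dist_eq z (f x) ▸ hdy).le⟩

theorem cluster_unique (hF : IsClosed (F : Set (BoundedContinuousFunction X ℂ)))
    {p : Set (Set X)} (hp : FUltrafilter F p)
    {f : BoundedContinuousFunction X ℂ} (hf : f ∈ F) {z w : ℂ}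
    (hz : ∀ A ∈ p, ∀ ε : ℝ, 0 < ε → ∃ x ∈ A, ‖f x - z‖ ≤ ε)
    (hw : ∀ A ∈ p, ∀ ε : ℝ, 0 < ε → ∃ x ∈ A, ‖f x - w‖ ≤ ε) : z = w := by
  by_contra hne
  have hd : 0 < ‖z - w‖ / 3 := by
    have : z - w ≠ 0 := sub_ne_zero.mpr hne
    have := norm_pos_iff.mpr this
    linarith
  have h1 := mem_of_cluster hF hp hf hz hd
  have h2 := mem_of_cluster hF hp hf hw hd
  obtain ⟨x, hx1, hx2⟩ := nonempty_of_mem' hp.1 (inter_mem' hp.1 h1 h2)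
  have ht : ‖z - w‖ ≤ ‖f x - z‖ + ‖f x - w‖ := by
    calc ‖z - w‖ = ‖(f x - w) - (f x - z)‖ := by ring_nf
      _ ≤ ‖f x - w‖ + ‖f x - z‖ := norm_sub_le _ _
      _ = ‖f x - z‖ + ‖f x - w‖ := add_comm _ _
  have hx1' : ‖f x - z‖ ≤ ‖z - w‖ / 3 := hx1
  have hx2' : ‖f x - w‖ ≤ ‖z - w‖ / 3 := hx2
  linarith

noncomputable def extFun (p : Delta F) (f : BoundedContinuousFunction X ℂ) : ℂ :=
  Classical.choose (exists_cluster p.2 f)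

theorem extFun_spec (p : Delta F) (f : BoundedContinuousFunction X ℂ) :
    ∀ A ∈ p.1, ∀ ε : ℝ, 0 < ε → ∃ x ∈ A, ‖f x - extFun p f‖ ≤ ε :=
  Classical.choose_spec (exists_cluster p.2 f)

theorem extFun_eq (hF : IsClosed (F : Set (BoundedContinuousFunction X ℂ)))
    {f : BoundedContinuousFunction X ℂ} (hf : f ∈ F) {p : Delta F} {z : ℂ}
    (hz : ∀ A ∈ p.1, ∀ ε : ℝ, 0 < ε → ∃ x ∈ A, ‖f x - z‖ ≤ ε) :
    extFun p f = z :=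
  cluster_unique hF p.2 hf (extFun_spec p f) hz

theorem extFun_e (hF : IsClosed (F : Set (BoundedContinuousFunction X ℂ)))
    {f : BoundedContinuousFunction X ℂ} (hf : f ∈ F) (e : X → Delta F)
    (he : ∀ x, (e x).1 = {A : Set X | A ∈ @nhds X (tauF F) x}) (x : X) :
    extFun (e x) f = f x := by
  apply extFun_eq hF hf
  intro A hA ε hε
  rw [he x, Set.mem_setOf_eq] at hA
  exact ⟨x, @mem_of_mem_nhds X (tauF F) _ _ hA, by simp [hε.le]⟩

theorem continuous_extFun (hF : IsClosed (F : Set (BoundedContinuousFunction X ℂ)))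
    {f : BoundedContinuousFunction X ℂ} (hf : f ∈ F) :
    Continuous fun p : Delta F => extFun p f := by
  rw [continuous_iff_continuousAt]
  intro p
  rw [ContinuousAt, Metric.tendsto_nhds]
  intro ε hε
  have h3 : (0:ℝ) < ε / 3 := by linarith
  have hA : {x : X | ‖f x - extFun p f‖ ≤ ε / 3} ∈ p.1 :=
    mem_of_cluster hF p.2 hf (extFun_spec p f) h3
  have hnb : hatSet F {x : X | ‖f x - extFun p f‖ ≤ ε / 3} ∈ nhds p :=
    (isBasis.isOpen ⟨_, rfl⟩).mem_nhds hA
  filter_upwards [hnb] with r hr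
  obtain ⟨x, hxA, hx⟩ := extFun_spec r f _ hr (ε / 3) h3
  have hxp : ‖f x - extFun p f‖ ≤ ε / 3 := hxA
  calc dist (extFun r f) (extFun p f)
      = ‖(extFun r f) - (extFun p f)‖ := dist_eq_norm _ _
    _ = ‖((extFun r f) - f x) + (f x - extFun p f)‖ := by ring_nf
    _ ≤ ‖(extFun r f) - f x‖ + ‖f x - extFun p f‖ := norm_add_le _ _
    _ = ‖f x - extFun r f‖ + ‖f x - extFun p f‖ := by rw [norm_sub_rev]
    _ ≤ ε / 3 + ε / 3 := add_le_add hx hxp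
    _ < ε := by linarith

theorem ext_unique (hF : IsClosed (F : Set (BoundedContinuousFunction X ℂ)))
    {f : BoundedContinuousFunction X ℂ} (hf : f ∈ F) (e : X → Delta F)
    (he : ∀ x, (e x).1 = {A : Set X | A ∈ @nhds X (tauF F) x})
    (g : Delta F → ℂ) (hg : Continuous g) (hge : ∀ x, f x = g (e x)) :
    g = fun p => extFun p f := by
  apply Continuous.ext_on (dense_range_e e he) hg (continuous_extFun hF hf)
  rintro _ ⟨x, rfl⟩
  show g (e x) = extFun (e x) f
  rw [← hge x, extFun_e hF hf e he x]

theorem extFun_zero {q : Delta F} {f : BoundedContinuousFunction X ℂ} {B : Set X}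
    (hB : B ∈ q.1) (h0 : ∀ x ∈ B, f x = 0) : extFun q f = 0 := by
  by_contra hne
  have hpos : 0 < ‖extFun q f‖ := norm_pos_iff.mpr hne
  obtain ⟨x, hxB, hx⟩ := extFun_spec q f B hB (‖extFun q f‖ / 2) (by linarith)
  rw [h0 x hxB, zero_sub, norm_neg] at hx
  linarith

theorem mem_of_extFun_zero (hF : IsClosed (F : Set (BoundedContinuousFunction X ℂ)))
    {r : Delta F} {f : BoundedContinuousFunction X ℂ} (hf : f ∈ F)
    (h0 : extFun r f = 0) {A : Set X} (h1 : ∀ x ∉ A, f x = 1) : A ∈ r.1 := by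
  have hspec : ∀ B ∈ r.1, ∀ ε : ℝ, 0 < ε → ∃ x ∈ B, ‖f x - 0‖ ≤ ε := by
    intro B hB ε hε
    obtain ⟨x, hxB, hx⟩ := extFun_spec r f B hB ε hε
    rw [h0] at hx
    exact ⟨x, hxB, hx⟩
  have hhalf := mem_of_cluster hF r.2 hf hspec (ε := 1/2) (by norm_num)
  refine mem_of_superset' r.2.1 hhalf ?_
  intro x hx
  by_contra hxA
  rw [Set.mem_setOf_eq, h1 x hxA, sub_zero] at hx
  norm_num at hx
end DeltaAux

end Aux
open DeltaAux
theorem stmt17 (F₁ F₂ : StarSubalgebra ℂ (BoundedContinuousFunction X ℂ))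
    (hF₁ : IsClosed (F₁ : Set (BoundedContinuousFunction X ℂ))) (hF₂ : IsClosed (F₂ : Set (BoundedContinuousFunction X ℂ)))
    (hle : (F₁ : Set (BoundedContinuousFunction X ℂ)) ⊆ (F₂ : Set (BoundedContinuousFunction X ℂ)))
    (e₁ : X → Delta F₁) (he₁ : ∀ x : X, (e₁ x).1 = {A : Set X | A ∈ @nhds X (tauF F₁) x})
    (e₂ : X → Delta F₂) (he₂ : ∀ x : X, (e₂ x).1 = {A : Set X | A ∈ @nhds X (tauF F₂) x})
    (G : Delta F₂ → Delta F₁) (hGc : Continuous G) (hGs : Function.Surjective G)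
    (hGe : e₁ = G ∘ e₂) (p : Delta F₂) (q : Delta F₁) :
    List.TFAE
      [q.1 ⊆ p.1,
       G p = q,
       ∀ f ∈ F₁, ∀ (g₁ : C(Delta F₁, ℂ)) (g₂ : C(Delta F₂, ℂ)),
         (∀ x : X, f x = g₁ (e₁ x)) → (∀ x : X, f x = g₂ (e₂ x)) →
         g₂ p = g₁ q] := by
  -- the canonical identity `ext₂ f = ext₁ f ∘ G` for `f ∈ F₁`
  have hGext : ∀ f : BoundedContinuousFunction X ℂ, f ∈ F₁ →
      (fun r : Delta F₂ => extFun (G r) f) = fun r : Delta F₂ => extFun r f := by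
    intro f hf
    apply ext_unique hF₂ (hle hf) e₂ he₂
    · exact (continuous_extFun hF₁ hf).comp hGc
    · intro x
      have : G (e₂ x) = e₁ x := by rw [hGe]; rfl
      show f x = extFun (G (e₂ x)) f
      rw [this, extFun_e hF₁ hf e₁ he₁ x]
  tfae_have 1 → 3 := by
    intro h f hf g₁ g₂ hg₁ hg₂
    have hgg₁ : ⇑g₁ = fun r : Delta F₁ => extFun r f :=
      ext_unique hF₁ hf e₁ he₁ g₁ g₁.continuous hg₁
    have hgg₂ : ⇑g₂ = fun r : Delta F₂ => extFun r f :=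
      ext_unique hF₂ (hle hf) e₂ he₂ g₂ g₂.continuous hg₂
    have h2p : g₂ p = extFun p f := by rw [hgg₂]
    have h1q : g₁ q = extFun q f := by rw [hgg₁]
    rw [h2p, h1q]
    symm
    apply extFun_eq hF₁ hf
    intro A hA ε hε
    exact extFun_spec p f A (h hA) ε hε
  tfae_have 3 → 2 := by
    intro h
    have key : ∀ f : BoundedContinuousFunction X ℂ, f ∈ F₁ →
        extFun (G p) f = extFun q f := by
      intro f hf
      have hc₁ : Continuous fun r : Delta F₁ => extFun r f := continuous_extFun hF₁ hf
      have := h f hf ⟨fun r : Delta F₁ => extFun r f, hc₁⟩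
        ⟨fun r : Delta F₂ => extFun (G r) f, hc₁.comp hGc⟩
        (fun x => (extFun_e hF₁ hf e₁ he₁ x).symm)
        (fun x => by
          have hx : G (e₂ x) = e₁ x := by rw [hGe]; rfl
          show f x = extFun (G (e₂ x)) f
          rw [hx, extFun_e hF₁ hf e₁ he₁ x])
      exact this
    have hsub : q.1 ⊆ (G p).1 := by
      intro A hA
      by_cases hAu : A = Set.univ
      · rw [hAu]; exact univ_mem' (G p).2.1
      · obtain ⟨B, hB, f, hfF, hf0, hf1⟩ := q.2.1.2.2.2 A hA hAu
        have hq0 : extFun q f = 0 := extFun_zero hB hf0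
        have hGp0 : extFun (G p) f = 0 := by rw [key f hfF, hq0]
        exact mem_of_extFun_zero hF₁ hfF hGp0 hf1
    have heq : (G p).1 = q.1 := q.2.2 (G p).1 (G p).2.1 hsub
    exact Subtype.ext heq
  tfae_have 2 → 1 := by
    intro h A hA
    rw [← h] at hA
    by_cases hAu : A = Set.univ
    · rw [hAu]; exact univ_mem' p.2.1
    · obtain ⟨B, hB, f, hfF, hf0, hf1⟩ := (G p).2.1.2.2.2 A hA hAu
      have hGp0 : extFun (G p) f = 0 := extFun_zero hB hf0
      have hp0 : extFun p f = 0 := by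
        have := congrFun (hGext f hfF) p
        rw [← this, hGp0]
      exact mem_of_extFun_zero hF₂ (hle hfF) hp0 hf1
  tfae_finish
end

section
/- If φ is an F-filter on X, then there exists a closed, proper ideal I of F such that φ is the filter generated by B(I). Conversely, if I is a closed, proper ideal of F, then B(I) is a filter base on X and the filter on X generated by B(I) is an F-filter. -/
open Set

variable {X : Type*} [Nonempty X] [TopologicalSpace X] [DiscreteTopology X]

/-! ### Auxiliary lemmas -/

lemma conjmul (z : ℂ) : (starRingEnd ℂ) z * z = ((‖z‖^2 : ℝ) : ℂ) := by
  rw [mul_comm, Complex.mul_conj, Complex.normSq_eq_norm_sq]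

/-- A continuous bounded real function of `‖g x‖²` belongs to any closed star subalgebra
containing `g`, by the Weierstrass approximation theorem. -/
lemma comp_mem (F : StarSubalgebra ℂ (BoundedContinuousFunction X ℂ))
    (hF : IsClosed (F : Set (BoundedContinuousFunction X ℂ))) (g : F)
    (ψ : ℝ → ℝ) (hψ : Continuous ψ) (C : ℝ) (hC : ∀ t, |ψ t| ≤ C) :
    ∃ f : BoundedContinuousFunction X ℂ, f ∈ F ∧
      ∀ x, f x = ((ψ (‖(g : BoundedContinuousFunction X ℂ) x‖^2) : ℝ) : ℂ) := by
  set gc : BoundedContinuousFunction X ℂ := (g : BoundedContinuousFunction X ℂ) with hgc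
  set kc : BoundedContinuousFunction X ℂ := star gc * gc with hkc
  have hkF : kc ∈ F := mul_mem (star_mem g.2) g.2
  have hkval : ∀ x, kc x = ((‖gc x‖^2 : ℝ) : ℂ) := by
    intro x
    simp [hkc, conjmul]
  set M : ℝ := ‖kc‖ with hM
  have htM : ∀ x, ‖gc x‖^2 ∈ Set.Icc (0:ℝ) M := by
    intro x
    refine ⟨by positivity, ?_⟩
    have h1 : ‖kc x‖ ≤ M := BoundedContinuousFunction.norm_coe_le_norm kc x
    rwa [hkval x, Complex.norm_real, Real.norm_eq_abs, abs_of_nonneg (by positivity)] at h1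
  set f : BoundedContinuousFunction X ℂ :=
    BoundedContinuousFunction.ofNormedAddCommGroup
      (fun x => ((ψ (‖gc x‖^2) : ℝ) : ℂ)) continuous_of_discreteTopology C
      (fun x => by simpa [Complex.norm_real] using hC (‖gc x‖^2)) with hf
  refine ⟨f, ?_, fun x => rfl⟩
  have : f ∈ closure (F : Set (BoundedContinuousFunction X ℂ)) := by
    rw [Metric.mem_closure_iff]
    intro ε hε
    obtain ⟨p, hp⟩ := exists_polynomial_near_of_continuousOn 0 M ψ hψ.continuousOn (ε/2)
      (by positivity)
    set P : Polynomial ℂ := p.map (algebraMap ℝ ℂ) with hP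
    refine ⟨Polynomial.aeval kc P, ?_, ?_⟩
    · have h1 : Algebra.adjoin ℂ {kc} ≤ F.toSubalgebra :=
        Algebra.adjoin_le (by simpa using hkF)
      exact h1 (Polynomial.aeval_mem_adjoin_singleton ℂ kc)
    · have hev : ∀ x : X, (Polynomial.aeval kc P) x = ((p.eval (‖gc x‖^2) : ℝ) : ℂ) := by
        intro x
        let ev : BoundedContinuousFunction X ℂ →ₐ[ℂ] ℂ :=
          { toFun := fun h => h x
            map_one' := rfl
            map_mul' := fun a b => rfl
            map_zero' := rfl
            map_add' := fun a b => rfl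
            commutes' := fun c => rfl }
        have h2 : (Polynomial.aeval kc P) x = Polynomial.aeval (kc x) P :=
          (Polynomial.aeval_algHom_apply ev kc P).symm
        rw [h2, hkval x, Polynomial.coe_aeval_eq_eval, hP, Polynomial.eval_map]
        exact Polynomial.eval₂_at_apply (algebraMap ℝ ℂ) _
      have hd : dist f (Polynomial.aeval kc P) ≤ ε/2 := by
        rw [BoundedContinuousFunction.dist_le (by positivity)]
        intro x
        rw [hev x]
        have hfx : f x = ((ψ (‖gc x‖^2) : ℝ) : ℂ) := rfl
        rw [hfx, Complex.isometry_ofReal.dist_eq, Real.dist_eq, abs_sub_comm]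
        exact (hp _ (htM x)).le
      linarith [hd]
  exact hF.closure_subset this

/-- For a proper closed ideal `I` of a closed star subalgebra `F`, each `X(f,r)` with
`f ∈ I`, `r > 0` is nonempty. -/
lemma XSet_nonempty (F : StarSubalgebra ℂ (BoundedContinuousFunction X ℂ))
    (hF : IsClosed (F : Set (BoundedContinuousFunction X ℂ)))
    (I : Ideal F) (hI : I ≠ ⊤) {f : F} (hf : f ∈ I) {r : ℝ} (hr : 0 < r) :
    (XSet (f : BoundedContinuousFunction X ℂ) r).Nonempty := by
  by_contra h
  rw [Set.not_nonempty_iff_eq_empty] at h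
  have hlt : ∀ x, r < ‖(f : BoundedContinuousFunction X ℂ) x‖ := by
    intro x
    by_contra hx
    push_neg at hx
    have : x ∈ XSet (f : BoundedContinuousFunction X ℂ) r := hx
    rw [h] at this
    exact this
  have hne : ∀ x, (f : BoundedContinuousFunction X ℂ) x ≠ 0 := by
    intro x hx
    have := hlt x
    rw [hx] at this
    simp at this
    linarith
  set v : BoundedContinuousFunction X ℂ :=
    BoundedContinuousFunction.ofNormedAddCommGroup
      (fun x => ((f : BoundedContinuousFunction X ℂ) x)⁻¹) continuous_of_discreteTopology r⁻¹
      (fun x => by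
        rw [norm_inv]
        exact inv_anti₀ hr (hlt x).le) with hv
  have hu : IsUnit (f : BoundedContinuousFunction X ℂ) := by
    refine ⟨⟨(f : BoundedContinuousFunction X ℂ), v, ?_, ?_⟩, rfl⟩
    · ext x
      have : v x = ((f : BoundedContinuousFunction X ℂ) x)⁻¹ := rfl
      simp [this, mul_inv_cancel₀ (hne x)]
    · ext x
      have : v x = ((f : BoundedContinuousFunction X ℂ) x)⁻¹ := rfl
      simp [this, inv_mul_cancel₀ (hne x)]
  have hu' : IsUnit f := (StarSubalgebra.coe_isUnit (S := F) (hS := hF)).mp hu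
  exact hI (I.eq_top_of_isUnit_mem hf hu')

lemma starmul_val (F : StarSubalgebra ℂ (BoundedContinuousFunction X ℂ)) (g : F) (x : X) :
    ((star g * g : F) : BoundedContinuousFunction X ℂ) x
      = ((‖(g : BoundedContinuousFunction X ℂ) x‖^2 : ℝ) : ℂ) := by
  simp [conjmul]

set_option maxHeartbeats 1000000 in
theorem stmt18 (F : StarSubalgebra ℂ (BoundedContinuousFunction X ℂ)) (hF : IsClosed (F : Set (BoundedContinuousFunction X ℂ))) :
    (∀ φ : Set (Set X), FFilter F φ →
      ∃ I : Ideal F, IsClosed (I : Set F) ∧ I ≠ ⊤ ∧ φ = genFilter (BIdeal F I)) ∧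
    ∀ I : Ideal F, IsClosed (I : Set F) → I ≠ ⊤ →
      IsFilterBase (BIdeal F I) ∧ FFilter F (genFilter (BIdeal F I)) := by
  constructor
  · -- Forward direction
    intro φ hφ
    obtain ⟨⟨⟨A₀, hA₀⟩, hinter, hup, hempty⟩, hfam⟩ := hφ
    set I : Ideal F :=
      { carrier := {f : F | ∀ r : ℝ, 0 < r → XSet (f : BoundedContinuousFunction X ℂ) r ∈ φ}
        add_mem' := by
          intro a b ha hb r hr
          refine hup _ (hinter _ (ha (r/2) (by positivity)) _ (hb (r/2) (by positivity))) _ ?_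
          rintro x ⟨hx1, hx2⟩
          have hx1' : ‖(a : BoundedContinuousFunction X ℂ) x‖ ≤ r/2 := hx1
          have hx2' : ‖(b : BoundedContinuousFunction X ℂ) x‖ ≤ r/2 := hx2
          show ‖((a + b : F) : BoundedContinuousFunction X ℂ) x‖ ≤ r
          have : ((a + b : F) : BoundedContinuousFunction X ℂ) x
              = (a : BoundedContinuousFunction X ℂ) x + (b : BoundedContinuousFunction X ℂ) x := rfl
          rw [this]
          calc ‖(a : BoundedContinuousFunction X ℂ) x + (b : BoundedContinuousFunction X ℂ) x‖
              ≤ ‖(a : BoundedContinuousFunction X ℂ) x‖ + ‖(b : BoundedContinuousFunction X ℂ) x‖ :=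
                norm_add_le _ _
            _ ≤ r := by linarith
        zero_mem' := by
          intro r hr
          refine hup _ hA₀ _ ?_
          intro x _
          show ‖((0 : F) : BoundedContinuousFunction X ℂ) x‖ ≤ r
          have : ((0 : F) : BoundedContinuousFunction X ℂ) x = 0 := rfl
          rw [this]
          simpa using hr.le
        smul_mem' := by
          intro c a ha r hr
          have hpos : (0:ℝ) < 1 + ‖c‖ := by
            have := norm_nonneg c
            linarith
          refine hup _ (ha (r / (1 + ‖c‖)) (div_pos hr hpos)) _ ?_
          intro x hx
          have hx' : ‖(a : BoundedContinuousFunction X ℂ) x‖ ≤ r / (1 + ‖c‖) := hx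
          show ‖((c • a : F) : BoundedContinuousFunction X ℂ) x‖ ≤ r
          have hcv : ((c • a : F) : BoundedContinuousFunction X ℂ) x
              = (c : BoundedContinuousFunction X ℂ) x * (a : BoundedContinuousFunction X ℂ) x := rfl
          rw [hcv, norm_mul]
          have hc1 : ‖(c : BoundedContinuousFunction X ℂ) x‖ ≤ 1 + ‖c‖ := by
            have := BoundedContinuousFunction.norm_coe_le_norm (c : BoundedContinuousFunction X ℂ) x
            have hnc : ‖(c : BoundedContinuousFunction X ℂ)‖ = ‖c‖ := rfl
            linarith [this.trans_eq hnc]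
          calc ‖(c : BoundedContinuousFunction X ℂ) x‖ * ‖(a : BoundedContinuousFunction X ℂ) x‖
              ≤ (1 + ‖c‖) * (r / (1 + ‖c‖)) :=
                mul_le_mul hc1 hx' (norm_nonneg _) hpos.le
            _ = r := by rw [mul_comm, div_mul_cancel₀ _ hpos.ne'] } with hI
    have hmemI : ∀ (a : F), a ∈ I ↔
        ∀ r : ℝ, 0 < r → XSet (a : BoundedContinuousFunction X ℂ) r ∈ φ := fun a => Iff.rfl
    refine ⟨I, ?_, ?_, ?_⟩
    · -- closed
      apply isClosed_of_closure_subset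
      intro a ha
      rw [SetLike.mem_coe, hmemI]
      intro r hr
      obtain ⟨g, hgI, hdist⟩ := Metric.mem_closure_iff.mp ha (r/2) (by positivity)
      refine hup _ ((hmemI g).mp hgI (r/2) (by positivity)) _ ?_
      intro x hx
      have hx' : ‖(g : BoundedContinuousFunction X ℂ) x‖ ≤ r/2 := hx
      show ‖(a : BoundedContinuousFunction X ℂ) x‖ ≤ r
      have h1 := BoundedContinuousFunction.norm_coe_le_norm
        ((a : BoundedContinuousFunction X ℂ) - (g : BoundedContinuousFunction X ℂ)) x
      have h2 : ‖(a : BoundedContinuousFunction X ℂ) - (g : BoundedContinuousFunction X ℂ)‖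
          = dist a g := (dist_eq_norm a g).symm
      rw [h2] at h1
      have h3 : ((a : BoundedContinuousFunction X ℂ) - (g : BoundedContinuousFunction X ℂ)) x
          = (a : BoundedContinuousFunction X ℂ) x - (g : BoundedContinuousFunction X ℂ) x := rfl
      rw [h3] at h1
      have h4 : ‖(a : BoundedContinuousFunction X ℂ) x‖
          ≤ ‖(a : BoundedContinuousFunction X ℂ) x - (g : BoundedContinuousFunction X ℂ) x‖
            + ‖(g : BoundedContinuousFunction X ℂ) x‖ := by
        simpa using norm_add_le
          ((a : BoundedContinuousFunction X ℂ) x - (g : BoundedContinuousFunction X ℂ) x)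
          ((g : BoundedContinuousFunction X ℂ) x)
      linarith
    · -- proper
      intro htop
      have h1 : (1 : F) ∈ I := htop ▸ Submodule.mem_top
      have h2 : XSet ((1 : F) : BoundedContinuousFunction X ℂ) (1/2) ∈ φ :=
        (hmemI 1).mp h1 (1/2) (by norm_num)
      have h3 : XSet ((1 : F) : BoundedContinuousFunction X ℂ) (1/2) = (∅ : Set X) := by
        ext x
        simp only [Set.mem_empty_iff_false, iff_false]
        intro hx
        have hx' : ‖((1 : F) : BoundedContinuousFunction X ℂ) x‖ ≤ 1/2 := hx
        have : ((1 : F) : BoundedContinuousFunction X ℂ) x = 1 := rfl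
        rw [this] at hx'
        norm_num at hx'
      rw [h3] at h2
      exact hempty h2
    · -- φ = genFilter (BIdeal F I)
      ext A
      constructor
      · intro hA
        by_cases hAuniv : A = Set.univ
        · refine ⟨XSet ((0 : F) : BoundedContinuousFunction X ℂ) 1,
            ⟨0, I.zero_mem, 1, one_pos, rfl⟩, ?_⟩
          rw [hAuniv]
          exact Set.subset_univ _
        · obtain ⟨B, hBφ, f, hfF, hfB, hfA⟩ := hfam.2.2 A hA hAuniv
          have hfI : (⟨f, hfF⟩ : F) ∈ I := by
            rw [hmemI]
            intro r hr
            refine hup _ hBφ _ ?_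
            intro x hx
            show ‖f x‖ ≤ r
            rw [hfB x hx]
            simpa using hr.le
          refine ⟨XSet f (1/2), ⟨⟨f, hfF⟩, hfI, 1/2, by norm_num, rfl⟩, ?_⟩
          intro x hx
          by_contra hxA
          have hx' : ‖f x‖ ≤ 1/2 := hx
          rw [hfA x hxA] at hx'
          norm_num at hx'
      · rintro ⟨B, ⟨g, hgI, r, hr, rfl⟩, hBA⟩
        exact hup _ ((hmemI g).mp hgI r hr) _ hBA
  · -- Converse direction
    intro I hIc hItop
    have hne : ∀ S ∈ BIdeal F I, S.Nonempty := by
      rintro S ⟨f, hf, r, hr, rfl⟩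
      exact XSet_nonempty F hF I hItop hf hr
    have h0mem : XSet ((0 : F) : BoundedContinuousFunction X ℂ) 1 ∈ BIdeal F I :=
      ⟨0, I.zero_mem, 1, one_pos, rfl⟩
    have hdir : ∀ A ∈ BIdeal F I, ∀ B ∈ BIdeal F I, ∃ C ∈ BIdeal F I, C ⊆ A ∩ B := by
      rintro A ⟨f, hf, r, hr, rfl⟩ B ⟨g, hg, s, hs, rfl⟩
      set h : F := star f * f + star g * g with hh0
      have hhI : h ∈ I := add_mem (I.mul_mem_left _ hf) (I.mul_mem_left _ hg)
      refine ⟨XSet (h : BoundedContinuousFunction X ℂ) (min (r^2) (s^2)),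
        ⟨h, hhI, _, lt_min (by positivity) (by positivity), rfl⟩, ?_⟩
      intro x hx
      have hval : (h : BoundedContinuousFunction X ℂ) x
          = ((‖(f : BoundedContinuousFunction X ℂ) x‖^2
              + ‖(g : BoundedContinuousFunction X ℂ) x‖^2 : ℝ) : ℂ) := by
        have e1 : (h : BoundedContinuousFunction X ℂ) x
            = ((star f * f : F) : BoundedContinuousFunction X ℂ) x
              + ((star g * g : F) : BoundedContinuousFunction X ℂ) x := rfl
        rw [e1, starmul_val, starmul_val]
        push_cast
        ring
      have hx' : ‖(f : BoundedContinuousFunction X ℂ) x‖^2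
          + ‖(g : BoundedContinuousFunction X ℂ) x‖^2 ≤ min (r^2) (s^2) := by
        have hxm : ‖(h : BoundedContinuousFunction X ℂ) x‖ ≤ min (r^2) (s^2) := hx
        rwa [hval, Complex.norm_real, Real.norm_eq_abs, abs_of_nonneg (by positivity)] at hxm
      have hf2 : ‖(f : BoundedContinuousFunction X ℂ) x‖^2 ≤ r^2 := by
        have := min_le_left (r^2) (s^2)
        nlinarith [sq_nonneg ‖(g : BoundedContinuousFunction X ℂ) x‖]
      have hg2 : ‖(g : BoundedContinuousFunction X ℂ) x‖^2 ≤ s^2 := by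
        have := min_le_right (r^2) (s^2)
        nlinarith [sq_nonneg ‖(f : BoundedContinuousFunction X ℂ) x‖]
      constructor
      · show ‖(f : BoundedContinuousFunction X ℂ) x‖ ≤ r
        nlinarith [norm_nonneg ((f : BoundedContinuousFunction X ℂ) x)]
      · show ‖(g : BoundedContinuousFunction X ℂ) x‖ ≤ s
        nlinarith [norm_nonneg ((g : BoundedContinuousFunction X ℂ) x)]
    have hbase : IsFilterBase (BIdeal F I) := by
      refine ⟨⟨_, h0mem⟩, ?_, hdir⟩
      intro hmem
      exact absurd (hne _ hmem) (by simp)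
    refine ⟨hbase, ?_, ?_⟩
    · -- IsSetFilter
      refine ⟨⟨Set.univ, XSet ((0 : F) : BoundedContinuousFunction X ℂ) 1, h0mem,
        Set.subset_univ _⟩, ?_, ?_, ?_⟩
      · rintro A ⟨B₁, hB₁, hB₁A⟩ B ⟨B₂, hB₂, hB₂B⟩
        obtain ⟨C, hC, hCsub⟩ := hdir _ hB₁ _ hB₂
        exact ⟨C, hC, hCsub.trans (Set.inter_subset_inter hB₁A hB₂B)⟩
      · rintro A ⟨B₁, hB₁, hB₁A⟩ B hAB
        exact ⟨B₁, hB₁, hB₁A.trans hAB⟩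
      · rintro ⟨B₁, hB₁, hB₁e⟩
        exact absurd (Set.eq_empty_iff_forall_notMem.mpr
          (fun x hx => hB₁e hx)) (Set.nonempty_iff_ne_empty.mp (hne _ hB₁))
    · -- FFamily
      refine ⟨⟨Set.univ, XSet ((0 : F) : BoundedContinuousFunction X ℂ) 1, h0mem,
        Set.subset_univ _⟩, ?_, ?_⟩
      · rintro A ⟨B, hB, hBA⟩
        exact (hne _ hB).mono hBA
      · rintro A ⟨S, ⟨g, hg, r, hr, rfl⟩, hSA⟩ hAne
        set ψ : ℝ → ℝ := fun t => min 1 (max 0 (2*t/r^2 - 1)) with hψ0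
        have hψc : Continuous ψ := by
          apply continuous_const.min
          apply continuous_const.max
          fun_prop
        have hψb : ∀ t, |ψ t| ≤ 1 := by
          intro t
          have h1 : ψ t ≤ 1 := min_le_left _ _
          have h2 : (0:ℝ) ≤ ψ t := le_min (by norm_num) (le_max_left _ _)
          rw [abs_le]
          exact ⟨by linarith, h1⟩
        obtain ⟨f, hfF, hfval⟩ := comp_mem F hF g ψ hψc 1 hψb
        have hrsq : (0:ℝ) < r^2 := by positivity
        refine ⟨XSet ((star g * g : F) : BoundedContinuousFunction X ℂ) (r^2/2),
          ⟨_, ⟨star g * g, I.mul_mem_left _ hg, r^2/2, by positivity, rfl⟩, subset_rfl⟩,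
          f, hfF, ?_, ?_⟩
        · intro x hx
          have hx' : ‖((star g * g : F) : BoundedContinuousFunction X ℂ) x‖ ≤ r^2/2 := hx
          rw [starmul_val, Complex.norm_real, Real.norm_eq_abs, abs_of_nonneg (by positivity)]
            at hx'
          have hc : 2 * ‖(g : BoundedContinuousFunction X ℂ) x‖^2 / r^2 - 1 ≤ 0 := by
            rw [sub_nonpos, div_le_one hrsq]
            linarith
          have hψ0' : ψ (‖(g : BoundedContinuousFunction X ℂ) x‖^2) = 0 := by
            rw [hψ0]
            simp only
            rw [max_eq_left hc, min_eq_right (by norm_num)]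
          rw [hfval x, hψ0']
          simp
        · intro x hxA
          have hxS : x ∉ XSet ((g : F) : BoundedContinuousFunction X ℂ) r := fun hx => hxA (hSA hx)
          have hgx : r < ‖(g : BoundedContinuousFunction X ℂ) x‖ := by
            by_contra hcon
            push_neg at hcon
            exact hxS hcon
          have hsq : r^2 < ‖(g : BoundedContinuousFunction X ℂ) x‖^2 := by
            nlinarith [hr.le]
          have hc : (1:ℝ) ≤ 2 * ‖(g : BoundedContinuousFunction X ℂ) x‖^2 / r^2 - 1 := by
            rw [le_sub_iff_add_le, le_div_iff₀ hrsq]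
            nlinarith
          have hψ1 : ψ (‖(g : BoundedContinuousFunction X ℂ) x‖^2) = 1 := by
            rw [hψ0]
            simp only
            rw [min_eq_left (le_trans hc (le_max_right _ _))]
          rw [hfval x, hψ1]
          simp
end
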